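/- arXiv:1607.08700 — 6 statements merged into one kernel-verified Lean document; each statement's English description precedes it below -/
import Mathlib

section
/- For every function f in the class ℱ, the first logarithmic coefficient satisfies |γ₁| ≤ 1/2. -/
open Complex Metric

/-- The `n`-th logarithmic coefficient `γₙ` of `f`, computed from an analytic branch `h`
of `log (f z / z)` with `h 0 = 0`: it is half the `n`-th Taylor coefficient of `h` at `0`. -/
noncomputable def logCoeff (h : ℂ → ℂ) (n : ℕ) : ℂ :=
  iteratedDeriv n h 0 / (2 * (n.factorial : ℂ))

/-- `g` is an odd starlike function on the unit disk. -/
def IsOddStarlike (g : ℂ → ℂ) : Prop :=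
  AnalyticOnNhd ℂ g (ball (0:ℂ) 1) ∧ g 0 = 0 ∧ deriv g 0 = 1 ∧
    (∀ z ∈ ball (0:ℂ) 1, z ≠ 0 → 0 < (z * deriv g z / g z).re) ∧
    (∀ z ∈ ball (0:ℂ) 1, g (-z) = -g z)

/-- `f` belongs to the class ℱ of close-to-convex functions with argument `0`
with respect to odd starlike functions. -/
def MemClassF (f : ℂ → ℂ) : Prop :=
  AnalyticOnNhd ℂ f (ball (0:ℂ) 1) ∧ f 0 = 0 ∧ deriv f 0 = 1 ∧
    ∃ g : ℂ → ℂ, IsOddStarlike g ∧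
      ∀ z ∈ ball (0:ℂ) 1, z ≠ 0 → 0 < (z * deriv f z / g z).re

/-- `h` is an analytic branch of `log (f z / z)` on the unit disk with `h 0 = 0`. -/
def IsLogBranch (f h : ℂ → ℂ) : Prop :=
  AnalyticOnNhd ℂ h (ball (0:ℂ) 1) ∧ h 0 = 0 ∧
    ∀ z ∈ ball (0:ℂ) 1, z ≠ 0 → Complex.exp (h z) = f z / z

lemma analyticOnNhd_dslope_ball {g : ℂ → ℂ} (hg : AnalyticOnNhd ℂ g (ball (0:ℂ) 1)) :
    AnalyticOnNhd ℂ (dslope g 0) (ball (0:ℂ) 1) := by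
  intro z hz
  rcases eq_or_ne z 0 with rfl | hne
  · obtain ⟨p, hp⟩ := hg 0 hz
    exact ⟨p.fslope, hp.has_fpower_series_dslope_fslope⟩
  · have h1 : AnalyticAt ℂ (slope g 0) z := by
      have : AnalyticAt ℂ (fun w : ℂ => (w - 0)⁻¹ • (g w - g 0)) z :=
        ((analyticAt_id.sub analyticAt_const).inv (by simpa using hne)).smul
          ((hg z hz).sub analyticAt_const)
      exact this
    exact h1.congr (dslope_eventuallyEq_slope_of_ne g hne).symm

/-- For every `f ∈ ℱ`, the first logarithmic coefficient satisfies `|γ₁| ≤ 1/2`. -/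
theorem abs_gamma_one_le (f h : ℂ → ℂ) (hf : MemClassF f) (hh : IsLogBranch f h) :
    ‖logCoeff h 1‖ ≤ 1 / 2 := by
  obtain ⟨hfa, hf0, hf1, g, ⟨hga, hg0, hg1, hgpos, hgodd⟩, hfg⟩ := hf
  obtain ⟨hha, hh0, hhe⟩ := hh
  have h01 : (0:ℂ) ∈ ball (0:ℂ) 1 := by simp
  have hgne : ∀ z ∈ ball (0:ℂ) 1, z ≠ 0 → g z ≠ 0 := by
    intro z hz hz0 hgz
    have := hgpos z hz hz0
    rw [hgz, div_zero] at this
    simp at this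
  set G := dslope g 0 with hG
  have hGa : AnalyticOnNhd ℂ G (ball 0 1) := analyticOnNhd_dslope_ball hga
  have hG0 : G 0 = 1 := by rw [hG, dslope_same, hg1]
  have hGz : ∀ z ∈ ball (0:ℂ) 1, z ≠ 0 → G z = g z / z := by
    intro z hz hz0
    rw [hG, dslope_of_ne _ hz0, slope_def_field, hg0]
    simp
  have hGne : ∀ z ∈ ball (0:ℂ) 1, G z ≠ 0 := by
    intro z hz
    rcases eq_or_ne z 0 with rfl | hz0
    · rw [hG0]; exact one_ne_zero
    · rw [hGz z hz hz0]
      exact div_ne_zero (hgne z hz hz0) hz0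
  -- G is even, so deriv G 0 = 0
  have hGeven : ∀ z ∈ ball (0:ℂ) 1, G (-z) = G z := by
    intro z hz
    rcases eq_or_ne z 0 with rfl | hz0
    · simp
    · have hzneg : -z ∈ ball (0:ℂ) 1 := by
        simpa [mem_ball_zero_iff] using hz
      rw [hGz _ hzneg (neg_ne_zero.2 hz0), hGz z hz hz0, hgodd z hz]
      rw [neg_div_neg_eq]
  have hGd0 : deriv G 0 = 0 := by
    have h1 : (fun z => G (-z)) =ᶠ[nhds (0:ℂ)] G := by
      filter_upwards [isOpen_ball.mem_nhds h01] with z hz using hGeven z hz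
    have hd : HasDerivAt G (deriv G 0) (-0 : ℂ) := by
      rw [neg_zero]; exact (hGa 0 h01).differentiableAt.hasDerivAt
    have h2 : HasDerivAt (fun z : ℂ => G (-z)) (deriv G 0 * -1) 0 :=
      hd.comp 0 (hasDerivAt_neg 0)
    have h3 : deriv (fun z : ℂ => G (-z)) 0 = deriv G 0 := h1.deriv_eq
    rw [h2.deriv] at h3
    linear_combination -h3 / 2
  -- the Carathéodory function q
  set q : ℂ → ℂ := fun z => deriv f z / G z with hq
  have hfda : AnalyticOnNhd ℂ (deriv f) (ball 0 1) := hfa.deriv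
  have hqa : AnalyticOnNhd ℂ q (ball 0 1) := fun z hz =>
    (hfda z hz).div (hGa z hz) (hGne z hz)
  have hq0 : q 0 = 1 := by rw [hq]; simp [hf1, hG0]
  have hqpos : ∀ z ∈ ball (0:ℂ) 1, 0 < (q z).re := by
    intro z hz
    rcases eq_or_ne z 0 with rfl | hz0
    · rw [hq0]; norm_num
    · have hq' : q z = z * deriv f z / g z := by
        rw [hq]
        simp only
        rw [hGz z hz hz0]
        field_simp
      rw [hq']; exact hfg z hz hz0
  -- the Schwarz function w
  have hqne : ∀ z ∈ ball (0:ℂ) 1, q z + 1 ≠ 0 := by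
    intro z hz hc
    have h1 := hqpos z hz
    have h2 : (q z).re + 1 = 0 := by
      have := congrArg Complex.re hc
      simpa using this
    linarith
  set w : ℂ → ℂ := fun z => (q z - 1) / (q z + 1) with hw
  have hwa : AnalyticOnNhd ℂ w (ball 0 1) := fun z hz =>
    ((hqa z hz).sub analyticAt_const).div ((hqa z hz).add analyticAt_const) (hqne z hz)
  have hw0 : w 0 = 0 := by rw [hw]; simp [hq0]
  have hwlt : ∀ z ∈ ball (0:ℂ) 1, ‖w z‖ < 1 := by
    intro z hz
    have hpos : 0 < ‖q z + 1‖ := by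
      exact norm_pos_iff.2 (hqne z hz)
    have hlt : ‖q z - 1‖ < ‖q z + 1‖ := by
      have h1 := hqpos z hz
      have e1 : Complex.normSq (q z - 1) < Complex.normSq (q z + 1) := by
        simp only [Complex.normSq_apply, Complex.sub_re, Complex.sub_im, Complex.add_re,
          Complex.add_im, Complex.one_re, Complex.one_im]
        nlinarith
      have := Real.sqrt_lt_sqrt (Complex.normSq_nonneg _) e1
      simpa [Complex.norm_def] using this
    rw [hw]
    simp only
    rw [norm_div, div_lt_one hpos]
    exact hlt
  have hmaps : Set.MapsTo w (ball (0:ℂ) 1) (ball (w 0) 1) := by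
    intro z hz
    rw [hw0]
    simpa [mem_ball_zero_iff] using hwlt z hz
  have hschwarz : ‖deriv w 0‖ ≤ 1 := by
    have := Complex.norm_deriv_le_div_of_mapsTo_ball
      (fun z hz => (hwa z hz).differentiableAt.differentiableWithinAt) (hmaps.mono_right ball_subset_closedBall) one_pos
    simpa using this
  have hqd : DifferentiableAt ℂ q 0 := (hqa 0 h01).differentiableAt
  have hwd : deriv w 0 = deriv q 0 / 2 := by
    rw [hw]
    rw [deriv_fun_div (hqd.sub_const 1) (hqd.add_const 1) (hqne 0 h01)]
    rw [deriv_sub_const, deriv_add_const, hq0]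
    ring
  have habsq : ‖deriv q 0‖ ≤ 2 := by
    rw [hwd, norm_div] at hschwarz
    have : ‖(2 : ℂ)‖ = 2 := by simp
    rw [this, div_le_one (by norm_num)] at hschwarz
    exact hschwarz
  -- compute deriv q 0 = f''(0)
  have hfd2 : DifferentiableAt ℂ (deriv f) 0 := (hfda 0 h01).differentiableAt
  have hGd : DifferentiableAt ℂ G 0 := (hGa 0 h01).differentiableAt
  have hqd0 : deriv q 0 = deriv (deriv f) 0 := by
    rw [hq]
    rw [deriv_fun_div hfd2 hGd (hGne 0 h01), hG0, hGd0, hf1]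
    simp
  -- F = dslope f 0, with f z = z * F z
  set F := dslope f 0 with hF
  have hFa : AnalyticOnNhd ℂ F (ball 0 1) := analyticOnNhd_dslope_ball hfa
  have hfzF : ∀ z : ℂ, f z = z * F z := by
    intro z
    have h1 := sub_smul_dslope f 0 z
    rw [hf0] at h1
    simpa [smul_eq_mul] using h1.symm
  have hFda : AnalyticOnNhd ℂ (deriv F) (ball 0 1) := hFa.deriv
  have hderivf : ∀ z ∈ ball (0:ℂ) 1, deriv f z = F z + z * deriv F z := by
    intro z hz
    have hFd : HasDerivAt F (deriv F z) z := (hFa z hz).differentiableAt.hasDerivAt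
    have h1 : HasDerivAt (fun w : ℂ => w * F w) (1 * F z + z * deriv F z) z :=
      (hasDerivAt_id' z).mul hFd
    have hfz : HasDerivAt f (1 * F z + z * deriv F z) z := by
      refine h1.congr_of_eventuallyEq ?_
      exact Filter.Eventually.of_forall fun w => hfzF w
    rw [hfz.deriv]; ring
  have hdd : deriv (deriv f) 0 = 2 * deriv F 0 := by
    have heq : deriv f =ᶠ[nhds (0:ℂ)] fun z => F z + z * deriv F z := by
      filter_upwards [isOpen_ball.mem_nhds h01] with z hz using hderivf z hz
    rw [heq.deriv_eq]
    have h1 : HasDerivAt (fun z : ℂ => F z + z * deriv F z)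
        (deriv F 0 + (1 * deriv F 0 + 0 * deriv (deriv F) 0)) 0 :=
      ((hFa 0 h01).differentiableAt.hasDerivAt).add
        ((hasDerivAt_id' 0).mul ((hFda 0 h01).differentiableAt.hasDerivAt))
    rw [h1.deriv]; ring
  -- F = exp ∘ h near 0
  have hFh : deriv F 0 = deriv h 0 := by
    have heq : F =ᶠ[nhds (0:ℂ)] fun z => Complex.exp (h z) := by
      filter_upwards [isOpen_ball.mem_nhds h01] with z hz
      rcases eq_or_ne z 0 with rfl | hz0
      · rw [hF, dslope_same, hf1, hh0, Complex.exp_zero]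
      · rw [hF, dslope_of_ne _ hz0, slope_def_field, hf0, hhe z hz hz0]
        simp
    rw [heq.deriv_eq]
    have h1 : HasDerivAt (fun z => Complex.exp (h z)) (Complex.exp (h 0) * deriv h 0) 0 :=
      ((hha 0 h01).differentiableAt.hasDerivAt).cexp
    rw [h1.deriv, hh0, Complex.exp_zero, one_mul]
  -- conclude
  have habsh : ‖deriv h 0‖ ≤ 1 := by
    rw [hqd0, hdd, hFh] at habsq
    rw [norm_mul] at habsq
    have h2 : ‖(2 : ℂ)‖ = 2 := by simp
    rw [h2] at habsq
    linarith
  rw [logCoeff, iteratedDeriv_one]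
  simp only [Nat.factorial_one, Nat.cast_one, mul_one, norm_div]
  have h2 : ‖(2 : ℂ)‖ = 2 := by simp
  rw [h2]
  linarith
end

section
/- For every function f in the class ℱ, the second logarithmic coefficient satisfies |γ₂| ≤ 1/2. -/
open Complex Metric Filter Set


section Helpers


private lemma analyticAt_deriv' {a : ℂ → ℂ} {x : ℂ} (ha : AnalyticAt ℂ a x) :
    AnalyticAt ℂ (deriv a) x := by
  obtain ⟨U, hU, hUo, hxU⟩ := _root_.eventually_nhds_iff.mp ha.eventually_analyticAt
  exact (AnalyticOnNhd.deriv_of_isOpen (fun y hy => hU y hy) hUo) x hxU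

private lemma ev_deriv_mul {a b : ℂ → ℂ} {x : ℂ} (ha : AnalyticAt ℂ a x)
    (hb : AnalyticAt ℂ b x) :
    deriv (fun z => a z * b z) =ᶠ[nhds x] fun z => deriv a z * b z + a z * deriv b z := by
  filter_upwards [ha.eventually_analyticAt, hb.eventually_analyticAt] with z hza hzb
  exact deriv_mul hza.differentiableAt hzb.differentiableAt

private lemma it2_eq {a : ℂ → ℂ} : iteratedDeriv 2 a = deriv (deriv a) := by
  rw [show (2:ℕ) = 1 + 1 from rfl, iteratedDeriv_succ, iteratedDeriv_one]

private lemma deriv_mul_pt {a b : ℂ → ℂ} {x : ℂ} (ha : AnalyticAt ℂ a x)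
    (hb : AnalyticAt ℂ b x) :
    deriv (fun z => a z * b z) x = deriv a x * b x + a x * deriv b x :=
  deriv_mul ha.differentiableAt hb.differentiableAt

private lemma it2_mul {a b : ℂ → ℂ} {x : ℂ} (ha : AnalyticAt ℂ a x)
    (hb : AnalyticAt ℂ b x) :
    iteratedDeriv 2 (fun z => a z * b z) x
      = iteratedDeriv 2 a x * b x + 2 * deriv a x * deriv b x
        + a x * iteratedDeriv 2 b x := by
  rw [it2_eq, (ev_deriv_mul ha hb).deriv_eq]
  rw [deriv_fun_add ((analyticAt_deriv' ha).fun_mul hb).differentiableAt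
      (ha.fun_mul (analyticAt_deriv' hb)).differentiableAt]
  rw [deriv_mul_pt (analyticAt_deriv' ha) hb, deriv_mul_pt ha (analyticAt_deriv' hb)]
  rw [it2_eq, it2_eq]
  ring

private lemma it2_add {a b : ℂ → ℂ} {x : ℂ} (ha : AnalyticAt ℂ a x)
    (hb : AnalyticAt ℂ b x) :
    iteratedDeriv 2 (fun z => a z + b z) x
      = iteratedDeriv 2 a x + iteratedDeriv 2 b x := by
  have hev : deriv (fun z => a z + b z) =ᶠ[nhds x] fun z => deriv a z + deriv b z := by
    filter_upwards [ha.eventually_analyticAt, hb.eventually_analyticAt] with z hza hzb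
    exact deriv_add hza.differentiableAt hzb.differentiableAt
  rw [it2_eq, hev.deriv_eq,
    deriv_fun_add (analyticAt_deriv' ha).differentiableAt (analyticAt_deriv' hb).differentiableAt,
    it2_eq, it2_eq]


-- z * G z  derivative facts
private lemma zmul_deriv {G : ℂ → ℂ} (hG : AnalyticAt ℂ G 0) :
    deriv (fun z => z * G z) 0 = G 0 := by
  rw [deriv_fun_mul differentiableAt_fun_id hG.differentiableAt]
  simp

private lemma zmul_ev {G : ℂ → ℂ} (hG : AnalyticAt ℂ G 0) :
    deriv (fun z => z * G z) =ᶠ[nhds 0] fun z => G z + z * deriv G z := by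
  filter_upwards [hG.eventually_analyticAt] with z hz
  rw [deriv_fun_mul differentiableAt_fun_id hz.differentiableAt]
  simp

private lemma zmul_it2 {G : ℂ → ℂ} (hG : AnalyticAt ℂ G 0) :
    iteratedDeriv 2 (fun z => z * G z) 0 = 2 * deriv G 0 := by
  rw [it2_eq, (zmul_ev hG).deriv_eq,
    deriv_fun_add hG.differentiableAt
      (differentiableAt_fun_id.fun_mul (analyticAt_deriv' hG).differentiableAt),
    deriv_fun_mul differentiableAt_fun_id (analyticAt_deriv' hG).differentiableAt]
  simp; ring

private lemma it2_mul' {a b : ℂ → ℂ} {x : ℂ} (ha : AnalyticAt ℂ a x)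
    (hb : AnalyticAt ℂ b x) :
    iteratedDeriv 2 (fun z => a z * b z) x
      = iteratedDeriv 2 a x * b x + 2 * deriv a x * deriv b x
        + a x * iteratedDeriv 2 b x := by
  have hev : deriv (fun z => a z * b z) =ᶠ[nhds x]
      fun z => deriv a z * b z + a z * deriv b z := by
    filter_upwards [ha.eventually_analyticAt, hb.eventually_analyticAt] with z hza hzb
    exact deriv_mul hza.differentiableAt hzb.differentiableAt
  rw [it2_eq, hev.deriv_eq,
    deriv_fun_add ((analyticAt_deriv' ha).fun_mul hb).differentiableAt
      (ha.fun_mul (analyticAt_deriv' hb)).differentiableAt,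
    deriv_fun_mul (analyticAt_deriv' ha).differentiableAt hb.differentiableAt,
    deriv_fun_mul ha.differentiableAt (analyticAt_deriv' hb).differentiableAt,
    it2_eq, it2_eq]
  ring

private lemma zmul_it3 {G : ℂ → ℂ} (hG : AnalyticAt ℂ G 0) :
    iteratedDeriv 3 (fun z => z * G z) 0 = 3 * iteratedDeriv 2 G 0 := by
  have h3 : iteratedDeriv 3 (fun z => z * G z) 0
      = iteratedDeriv 2 (deriv (fun z => z * G z)) 0 := by
    rw [show (3:ℕ) = 2 + 1 from rfl, iteratedDeriv_succ']
  rw [h3, (zmul_ev hG).iteratedDeriv_eq 2]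
  have hadd : iteratedDeriv 2 (fun z => G z + z * deriv G z) 0
      = iteratedDeriv 2 G 0 + iteratedDeriv 2 (fun z => z * deriv G z) 0 := by
    have hev : deriv (fun z => G z + z * deriv G z) =ᶠ[nhds 0]
        fun z => deriv G z + deriv (fun w => w * deriv G w) z := by
      filter_upwards [hG.eventually_analyticAt] with z hz
      exact deriv_add hz.differentiableAt
        (differentiableAt_fun_id.mul (analyticAt_deriv' hz).differentiableAt)
    rw [it2_eq, hev.deriv_eq,
      deriv_fun_add (analyticAt_deriv' hG).differentiableAt
        (show DifferentiableAt ℂ (deriv (fun w : ℂ => w * deriv G w)) 0 from (analyticAt_deriv' (analyticAt_id.mul (analyticAt_deriv' hG))).differentiableAt),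
      it2_eq, it2_eq]
  rw [hadd, zmul_it2 (analyticAt_deriv' hG), it2_eq]
  ring


private lemma analyticOnNhd_dslope' {w : ℂ → ℂ} {R : ℝ}
    (hw : AnalyticOnNhd ℂ w (ball (0:ℂ) R)) (hR : (0:ℝ) < R) :
    AnalyticOnNhd ℂ (dslope w 0) (ball (0:ℂ) R) := by
  intro z hz
  rcases eq_or_ne z 0 with rfl | hz0
  · obtain ⟨p, hp⟩ := hw 0 (mem_ball_self hR)
    exact (hp.has_fpower_series_dslope_fslope).analyticAt
  · have : AnalyticAt ℂ (fun y => (y - 0)⁻¹ • (w y - w 0)) z := by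
      apply AnalyticAt.fun_smul
      · exact (analyticAt_id.sub analyticAt_const).inv (by simpa using hz0)
      · exact (hw z hz).sub analyticAt_const
    refine this.congr ?_
    filter_upwards [isOpen_ne.mem_nhds hz0] with y hy
    rw [dslope_of_ne _ hy]
    rfl

private lemma moebius_norm_le {a w : ℂ} (ha : ‖a‖ ≤ 1) (hw : ‖w‖ ≤ 1) :
    ‖w - a‖ ≤ ‖1 - (starRingEnd ℂ) a * w‖ := by
  have h1 : normSq (w - a) ≤ normSq (1 - (starRingEnd ℂ) a * w) := by
    have key : normSq (1 - (starRingEnd ℂ) a * w) - normSq (w - a)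
        = (1 - normSq a) * (1 - normSq w) := by
      simp only [normSq_apply, Complex.sub_re, Complex.sub_im, Complex.one_re, Complex.one_im,
        Complex.mul_re, Complex.mul_im, Complex.conj_re, Complex.conj_im]
      ring
    have ha' : normSq a ≤ 1 := by
      rw [← Complex.sq_norm]
      nlinarith [norm_nonneg a, ha]
    have hw' : normSq w ≤ 1 := by
      rw [← Complex.sq_norm]
      nlinarith [norm_nonneg w, hw]
    nlinarith [normSq_nonneg (w - a), normSq_nonneg (1 - (starRingEnd ℂ) a * w)]
  have := Real.sqrt_le_sqrt h1
  simpa only [Complex.norm_def] using this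

private lemma schwarz_psi_bound {w : ℂ → ℂ}
    (hw : AnalyticOnNhd ℂ w (ball (0:ℂ) 1)) (hw0 : w 0 = 0)
    (hb : ∀ z ∈ ball (0:ℂ) 1, ‖w z‖ ≤ 1) :
    ∀ z ∈ ball (0:ℂ) 1, ‖dslope w 0 z‖ ≤ 1 := by
  intro z hz
  refine le_of_forall_pos_le_add fun ε hε => ?_
  have hmaps : MapsTo w (ball (0:ℂ) 1) (closedBall (w 0) (1 + ε)) := by
    intro x hx
    rw [hw0, mem_closedBall_zero_iff]
    exact le_trans (hb x hx) (by linarith)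
  have := Complex.norm_dslope_le_div_of_mapsTo_ball hw.differentiableOn hmaps hz
  simpa using this

private lemma schwarz_second {w : ℂ → ℂ}
    (hw : AnalyticOnNhd ℂ w (ball (0:ℂ) 1)) (hw0 : w 0 = 0)
    (hb : ∀ z ∈ ball (0:ℂ) 1, ‖w z‖ ≤ 1) :
    ‖deriv (dslope w 0) 0‖ ≤ 1 - ‖deriv w 0‖ ^ 2 := by
  set ψ := dslope w 0 with hψdef
  have hψan := analyticOnNhd_dslope' hw one_pos
  have hψb := schwarz_psi_bound hw hw0 hb
  have hψ0 : ψ 0 = deriv w 0 := dslope_same w 0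
  set a := deriv w 0 with ha_def
  have hanorm : ‖a‖ ≤ 1 := by
    simpa [hψ0] using hψb 0 (mem_ball_self one_pos)
  rcases lt_or_eq_of_le hanorm with halt | haeq
  · -- ‖a‖ < 1
    set c := (starRingEnd ℂ) a with hc_def
    have hDne : ∀ z ∈ ball (0:ℂ) 1, (1:ℂ) - c * ψ z ≠ 0 := by
      intro z hz hcon
      have h1 : ‖c * ψ z‖ < 1 := by
        rw [norm_mul]
        calc ‖c‖ * ‖ψ z‖ ≤ ‖c‖ * 1 := by
              exact mul_le_mul_of_nonneg_left (hψb z hz) (norm_nonneg _)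
          _ = ‖a‖ := by simp [hc_def]
          _ < 1 := halt
      have : (1:ℂ) = c * ψ z := by linear_combination hcon
      rw [← this] at h1; simp at h1
    set φ := fun z => (ψ z - a) / (1 - c * ψ z) with hφdef
    have hφan : AnalyticOnNhd ℂ φ (ball (0:ℂ) 1) := fun z hz =>
      ((hψan z hz).sub analyticAt_const).div
        (analyticAt_const.sub (analyticAt_const.mul (hψan z hz))) (hDne z hz)
    have hφ0 : φ 0 = 0 := by simp [hφdef, hψ0]
    have hφb : ∀ z ∈ ball (0:ℂ) 1, ‖φ z‖ ≤ 1 := by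
      intro z hz
      rw [hφdef]
      simp only [norm_div]
      rw [div_le_one (lt_of_le_of_ne (norm_nonneg _)
        (fun hcon => (hDne z hz) (by rwa [eq_comm, norm_eq_zero] at hcon)))]
      simpa using moebius_norm_le hanorm (hψb z hz)
    -- Schwarz derivative bound for φ
    have hφd : ‖deriv φ 0‖ ≤ 1 := by
      refine le_of_forall_pos_le_add fun ε hε => ?_
      have hmaps : MapsTo φ (ball (0:ℂ) 1) (closedBall (φ 0) (1 + ε)) := by
        intro x hx
        rw [hφ0, mem_closedBall_zero_iff]
        exact le_trans (hφb x hx) (by linarith)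
      have := Complex.norm_dslope_le_div_of_mapsTo_ball hφan.differentiableOn hmaps
        (mem_ball_self one_pos)
      rw [dslope_same] at this
      simpa using this
    -- compute deriv φ 0
    set dψ := deriv ψ 0 with hdψ
    have hψd : HasDerivAt ψ dψ 0 := (hψan 0 (mem_ball_self one_pos)).differentiableAt.hasDerivAt
    have hD0 : (1:ℂ) - c * a ≠ 0 := by
      have := hDne 0 (mem_ball_self one_pos); rwa [hψ0] at this
    have hder : HasDerivAt φ
        ((dψ * (1 - c * ψ 0) - (ψ 0 - a) * (0 - c * dψ)) / (1 - c * ψ 0) ^ 2) 0 := by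
      exact HasDerivAt.div (hψd.sub_const a)
        ((hasDerivAt_const 0 (1:ℂ)).sub (hψd.const_mul c)) (by rwa [hψ0])
    have hφderiv : deriv φ 0 = dψ / (1 - c * a) := by
      rw [hder.deriv, hψ0]
      field_simp
      ring
    -- conclude
    have hkey : ‖dψ‖ ≤ ‖(1:ℂ) - c * a‖ := by
      have h2 : ‖dψ‖ / ‖(1:ℂ) - c * a‖ ≤ 1 := by
        rw [← norm_div, ← hφderiv]; exact hφd
      rwa [div_le_one (norm_pos_iff.mpr hD0)] at h2
    have hval : (1:ℂ) - c * a = ((1 - normSq a : ℝ) : ℂ) := by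
      rw [hc_def, mul_comm, Complex.mul_conj]
      push_cast
      ring
    have hsq : normSq a = ‖a‖ ^ 2 := by
      rw [Complex.sq_norm]
    have hnormval : ‖(1:ℂ) - c * a‖ = 1 - ‖a‖ ^ 2 := by
      rw [hval, Complex.norm_real, Real.norm_eq_abs,
        _root_.abs_of_nonneg (by nlinarith [norm_nonneg a] : (0:ℝ) ≤ 1 - normSq a), hsq]
    rw [← hdψ] at *
    calc ‖deriv ψ 0‖ ≤ ‖(1:ℂ) - c * a‖ := hkey
      _ = 1 - ‖a‖ ^ 2 := hnormval
  · -- ‖a‖ = 1 : maximum modulus ⇒ ψ constant ⇒ deriv ψ 0 = 0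
    have hmax : IsMaxOn (norm ∘ ψ) (ball (0:ℂ) 1) 0 := by
      intro z hz
      have : ‖ψ z‖ ≤ ‖ψ 0‖ := by
        rw [hψ0]; exact le_trans (hψb z hz) (le_of_eq haeq.symm)
      exact this
    have heq := Complex.eqOn_of_isPreconnected_of_isMaxOn_norm
      (convex_ball (0:ℂ) 1).isPreconnected isOpen_ball hψan.differentiableOn
      (mem_ball_self one_pos) hmax
    have hev : ψ =ᶠ[nhds 0] fun _ => ψ 0 :=
      heq.eventuallyEq_of_mem (ball_mem_nhds 0 one_pos)
    have : deriv ψ 0 = 0 := by rw [hev.deriv_eq]; simp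
    rw [this, norm_zero]
    nlinarith [haeq]

private lemma carath {P : ℂ → ℂ} (hP : AnalyticOnNhd ℂ P (ball (0:ℂ) 1))
    (hP0 : P 0 = 1) (hre : ∀ z ∈ ball (0:ℂ) 1, 0 < (P z).re) :
    ‖iteratedDeriv 2 P 0 - (deriv P 0) ^ 2‖ ≤ 4 - ‖deriv P 0‖ ^ 2 := by
  have h0mem : (0:ℂ) ∈ ball (0:ℂ) 1 := mem_ball_self one_pos
  have hDne : ∀ z ∈ ball (0:ℂ) 1, P z + 1 ≠ 0 := by
    intro z hz hcon
    have h1 : (P z + 1).re = 0 := by rw [hcon]; simp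
    have h2 : 0 < (P z).re := hre z hz
    simp only [add_re, one_re] at h1
    linarith
  set w := fun z => (P z - 1) / (P z + 1) with hwdef
  have hwan : AnalyticOnNhd ℂ w (ball (0:ℂ) 1) := fun z hz =>
    ((hP z hz).sub analyticAt_const).div ((hP z hz).add analyticAt_const) (hDne z hz)
  have hw0 : w 0 = 0 := by simp [hwdef, hP0]
  have hb : ∀ z ∈ ball (0:ℂ) 1, ‖w z‖ ≤ 1 := by
    intro z hz
    rw [hwdef]
    simp only [norm_div]
    rw [div_le_one (norm_pos_iff.mpr (hDne z hz))]
    have hsq : normSq (P z - 1) ≤ normSq (P z + 1) := by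
      have := hre z hz
      simp only [normSq_apply, sub_re, sub_im, add_re, add_im, one_re, one_im]
      nlinarith
    have := Real.sqrt_le_sqrt hsq
    simpa only [Complex.norm_def] using this
  set d := deriv P 0 with hd_def
  set e := iteratedDeriv 2 P 0 with he_def
  have hPd : HasDerivAt P d 0 := (hP 0 h0mem).differentiableAt.hasDerivAt
  have hD0 : P 0 + 1 ≠ 0 := hDne 0 h0mem
  -- first derivative of w at 0
  have hwd : deriv w 0 = d / 2 := by
    have hder : HasDerivAt w ((d * (P 0 + 1) - (P 0 - 1) * d) / (P 0 + 1) ^ 2) 0 :=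
      HasDerivAt.div (hPd.sub_const 1) (hPd.add_const 1) hD0
    rw [hder.deriv, hP0]
    norm_num
    ring
  -- deriv w on the ball
  have hev : deriv w =ᶠ[nhds 0] fun z => 2 * deriv P z / (P z + 1) ^ 2 := by
    filter_upwards [ball_mem_nhds (0:ℂ) one_pos] with z hz
    have hPz : HasDerivAt P (deriv P z) z := (hP z hz).differentiableAt.hasDerivAt
    have hder : HasDerivAt w
        ((deriv P z * (P z + 1) - (P z - 1) * deriv P z) / (P z + 1) ^ 2) z :=
      HasDerivAt.div (hPz.sub_const 1) (hPz.add_const 1) (hDne z hz)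
    rw [hder.deriv]
    congr 1
    ring
  -- second derivative of w at 0
  have hit2 : iteratedDeriv 2 w 0 = (e - d ^ 2) / 2 := by
    have hnum : HasDerivAt (fun z => 2 * deriv P z) (2 * e) 0 := by
      have : HasDerivAt (deriv P) (deriv (deriv P) 0) 0 :=
        (analyticAt_deriv' (hP 0 h0mem)).differentiableAt.hasDerivAt
      rw [he_def, it2_eq]
      exact this.const_mul 2
    have hden : HasDerivAt (fun z => (P z + 1) ^ 2) (2 * (P 0 + 1) ^ 1 * d) 0 := by
      simpa using ((hPd.add_const 1).fun_pow 2)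
    have hD0' : (P 0 + 1) ^ 2 ≠ 0 := pow_ne_zero 2 hD0
    have hder : HasDerivAt (fun z => 2 * deriv P z / (P z + 1) ^ 2)
        ((2 * e * (P 0 + 1) ^ 2 - 2 * deriv P 0 * (2 * (P 0 + 1) ^ 1 * d)) / ((P 0 + 1) ^ 2) ^ 2)
        0 := HasDerivAt.div hnum hden hD0'
    rw [it2_eq, hev.deriv_eq, hder.deriv, hP0, ← hd_def]
    field_simp
    ring
  -- dslope of w
  set ψ := dslope w 0 with hψdef
  have hψan : AnalyticAt ℂ ψ 0 := analyticOnNhd_dslope' hwan one_pos 0 h0mem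
  have hweq : w = fun z => z * ψ z := by
    funext z
    have := sub_smul_dslope w 0 z
    simp only [sub_zero, smul_eq_mul, hw0] at this
    rw [← this, hψdef]
  have hψd : deriv ψ 0 = (e - d ^ 2) / 4 := by
    have := zmul_it2 hψan
    rw [← hweq, hit2] at this
    field_simp at this
    linear_combination -this / 4
  have hsec := schwarz_second hwan hw0 hb
  rw [← hψdef, hψd, hwd] at hsec
  have h4 : ‖e - d ^ 2‖ / 4 ≤ 1 - ‖d‖ ^ 2 / 4 := by
    calc ‖e - d ^ 2‖ / 4 = ‖(e - d ^ 2) / 4‖ := by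
          rw [norm_div]; norm_num
      _ ≤ 1 - ‖d / 2‖ ^ 2 := hsec
      _ = 1 - ‖d‖ ^ 2 / 4 := by rw [norm_div]; norm_num; ring
  linarith

end Helpers

/-- For every `f ∈ ℱ`, the second logarithmic coefficient satisfies `|γ₂| ≤ 1/2`. -/
theorem abs_gamma_two_le (f h : ℂ → ℂ) (hf : MemClassF f) (hh : IsLogBranch f h) :
    ‖logCoeff h 2‖ ≤ 1 / 2 := by
  obtain ⟨hfa, hf0, hf'0, g, ⟨hga, hg0, hg'0, hgstar, hgodd⟩, hfg⟩ := hf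
  obtain ⟨hha, hh0, hhexp⟩ := hh
  have h0mem : (0:ℂ) ∈ ball (0:ℂ) 1 := mem_ball_self one_pos
  -- g does not vanish on the punctured ball
  have hgne : ∀ z ∈ ball (0:ℂ) 1, z ≠ 0 → g z ≠ 0 := by
    intro z hz hz0 hcon
    have := hgstar z hz hz0
    rw [hcon, div_zero] at this
    simp at this
  -- G = dslope g 0
  set G := dslope g 0 with hGdef
  have hGan : AnalyticOnNhd ℂ G (ball (0:ℂ) 1) := analyticOnNhd_dslope' hga one_pos
  have hG0 : G 0 = 1 := by rw [hGdef, dslope_same, hg'0]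
  have hGz : ∀ z : ℂ, z ≠ 0 → G z = g z / z := by
    intro z hz0
    rw [hGdef, dslope_of_ne _ hz0, slope_def_field, hg0, sub_zero, sub_zero]
  have hGne : ∀ z ∈ ball (0:ℂ) 1, G z ≠ 0 := by
    intro z hz
    rcases eq_or_ne z 0 with rfl | hz0
    · rw [hG0]; exact one_ne_zero
    · rw [hGz z hz0]; exact div_ne_zero (hgne z hz hz0) hz0
  -- the Carathéodory functions p and q
  set p := fun z => deriv f z / G z with hpdef
  set q := fun z => deriv g z / G z with hqdef
  have hfa' : AnalyticOnNhd ℂ (deriv f) (ball (0:ℂ) 1) := hfa.deriv_of_isOpen isOpen_ball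
  have hga' : AnalyticOnNhd ℂ (deriv g) (ball (0:ℂ) 1) := hga.deriv_of_isOpen isOpen_ball
  have hpan : AnalyticOnNhd ℂ p (ball (0:ℂ) 1) := fun z hz =>
    (hfa' z hz).div (hGan z hz) (hGne z hz)
  have hqan : AnalyticOnNhd ℂ q (ball (0:ℂ) 1) := fun z hz =>
    (hga' z hz).div (hGan z hz) (hGne z hz)
  have hp0 : p 0 = 1 := by rw [hpdef]; simp [hG0, hf'0]
  have hq0 : q 0 = 1 := by rw [hqdef]; simp [hG0, hg'0]
  have hpre : ∀ z ∈ ball (0:ℂ) 1, 0 < (p z).re := by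
    intro z hz
    rcases eq_or_ne z 0 with rfl | hz0
    · rw [hp0]; norm_num
    · have hpz : p z = z * deriv f z / g z := by
        rw [hpdef]
        simp only
        rw [hGz z hz0]
        field_simp [hgne z hz hz0]
      rw [hpz]; exact hfg z hz hz0
  have hqre : ∀ z ∈ ball (0:ℂ) 1, 0 < (q z).re := by
    intro z hz
    rcases eq_or_ne z 0 with rfl | hz0
    · rw [hq0]; norm_num
    · have hqz : q z = z * deriv g z / g z := by
        rw [hqdef]
        simp only
        rw [hGz z hz0]
        field_simp [hgne z hz hz0]
      rw [hqz]; exact hgstar z hz hz0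
  -- Carathéodory bounds
  have hpbound := carath hpan hp0 hpre
  have hqbound := carath hqan hq0 hqre
  set dp := deriv p 0 with hdp_def
  set ep := iteratedDeriv 2 p 0 with hep_def
  set dq := deriv q 0 with hdq_def
  set eq' := iteratedDeriv 2 q 0 with heq_def
  -- function identities
  have hfd_ev : deriv f =ᶠ[nhds 0] fun z => p z * G z := by
    filter_upwards [ball_mem_nhds (0:ℂ) one_pos] with z hz
    rw [hpdef]
    simp only
    rw [div_mul_cancel₀ _ (hGne z hz)]
  have hgd_ev : deriv g =ᶠ[nhds 0] fun z => q z * G z := by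
    filter_upwards [ball_mem_nhds (0:ℂ) one_pos] with z hz
    rw [hqdef]
    simp only
    rw [div_mul_cancel₀ _ (hGne z hz)]
  have hgeq : g = fun z => z * G z := by
    funext z
    have := sub_smul_dslope g 0 z
    simp only [sub_zero, smul_eq_mul, hg0] at this
    rw [← this, hGdef]
  -- oddness: iteratedDeriv 2 g 0 = 0
  have hit2g : iteratedDeriv 2 g 0 = 0 := by
    have hodd_ev : (fun z => g (-z)) =ᶠ[nhds 0] fun z => -g z := by
      filter_upwards [ball_mem_nhds (0:ℂ) one_pos] with z hz
      exact hgodd z hz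
    have h1 : iteratedDeriv 2 (fun z => g (-z)) 0 = iteratedDeriv 2 g 0 := by
      rw [iteratedDeriv_comp_neg 2 g 0]
      simp
    have h2 : iteratedDeriv 2 (fun z => -g z) 0 = -iteratedDeriv 2 g 0 :=
      iteratedDeriv_neg 2 g 0
    have := hodd_ev.iteratedDeriv_eq 2
    rw [h1, h2] at this
    linear_combination this / 2
  -- coefficients of G
  have hB1 : deriv G 0 = 0 := by
    have := zmul_it2 (hGan 0 h0mem)
    rw [← hgeq, hit2g] at this
    linear_combination -this / 2
  have hdq0 : dq = 0 := by
    have h1 : iteratedDeriv 2 g 0 = deriv (fun z => q z * G z) 0 := by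
      rw [it2_eq, hgd_ev.deriv_eq]
    rw [hit2g, deriv_mul_pt (hqan 0 h0mem) (hGan 0 h0mem), hG0, hq0, hB1] at h1
    simpa using h1.symm
  -- B2 = iteratedDeriv 2 G 0 = eq' / 2
  have hit3g : iteratedDeriv 3 g 0 = iteratedDeriv 2 (fun z => q z * G z) 0 := by
    rw [show (3:ℕ) = 2 + 1 from rfl, iteratedDeriv_succ', hgd_ev.iteratedDeriv_eq 2]
  have hB2 : iteratedDeriv 2 G 0 = eq' / 2 := by
    have h1 : iteratedDeriv 3 g 0 = 3 * iteratedDeriv 2 G 0 := by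
      rw [hgeq] at hit3g ⊢
      exact zmul_it3 (hGan 0 h0mem)
    rw [hit3g, it2_mul' (hqan 0 h0mem) (hGan 0 h0mem), hG0, hq0, hB1] at h1
    rw [heq_def]
    linear_combination -h1 / 2
  -- f-side: F = dslope f 0
  set F := dslope f 0 with hFdef
  have hFan : AnalyticOnNhd ℂ F (ball (0:ℂ) 1) := analyticOnNhd_dslope' hfa one_pos
  have hF0 : F 0 = 1 := by rw [hFdef, dslope_same, hf'0]
  have hfeq : f = fun z => z * F z := by
    funext z
    have := sub_smul_dslope f 0 z
    simp only [sub_zero, smul_eq_mul, hf0] at this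
    rw [← this, hFdef]
  set A1 := deriv F 0 with hA1_def
  set A2 := iteratedDeriv 2 F 0 with hA2_def
  have hA1 : 2 * A1 = dp := by
    have h1 : iteratedDeriv 2 f 0 = deriv (fun z => p z * G z) 0 := by
      rw [it2_eq, hfd_ev.deriv_eq]
    have h2 : iteratedDeriv 2 f 0 = 2 * A1 := by
      rw [hfeq]; exact zmul_it2 (hFan 0 h0mem)
    rw [h2, deriv_mul_pt (hpan 0 h0mem) (hGan 0 h0mem), hG0, hp0, hB1] at h1
    rw [hdp_def]
    linear_combination h1
  have hA2 : 3 * A2 = ep + eq' / 2 := by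
    have h1 : iteratedDeriv 3 f 0 = iteratedDeriv 2 (fun z => p z * G z) 0 := by
      rw [show (3:ℕ) = 2 + 1 from rfl, iteratedDeriv_succ', hfd_ev.iteratedDeriv_eq 2]
    have h2 : iteratedDeriv 3 f 0 = 3 * A2 := by
      rw [hfeq]; exact zmul_it3 (hFan 0 h0mem)
    rw [h2, it2_mul' (hpan 0 h0mem) (hGan 0 h0mem), hG0, hp0, hB1, hB2] at h1
    rw [hep_def, heq_def]
    linear_combination h1
  -- h-side
  set E := fun z => Complex.exp (h z) with hEdef
  have hEF_ev : E =ᶠ[nhds 0] F := by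
    filter_upwards [ball_mem_nhds (0:ℂ) one_pos] with z hz
    rcases eq_or_ne z 0 with rfl | hz0
    · rw [hEdef]; simp only; rw [hh0, Complex.exp_zero, hF0]
    · rw [hEdef]
      simp only
      rw [hhexp z hz hz0, hFdef, dslope_of_ne _ hz0, slope_def_field, hf0, sub_zero, sub_zero]
  have hEan : AnalyticAt ℂ E 0 := (hFan 0 h0mem).congr hEF_ev.symm
  have hE_ev : deriv E =ᶠ[nhds 0] fun z => Complex.exp (h z) * deriv h z := by
    filter_upwards [ball_mem_nhds (0:ℂ) one_pos] with z hz
    exact ((hha z hz).differentiableAt.hasDerivAt.cexp).deriv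
  have hderivh : deriv h 0 = A1 := by
    have h1 : deriv E 0 = deriv F 0 := hEF_ev.deriv_eq
    have h2 : deriv E 0 = Complex.exp (h 0) * deriv h 0 :=
      ((hha 0 h0mem).differentiableAt.hasDerivAt.cexp).deriv
    rw [hh0, Complex.exp_zero, one_mul] at h2
    rw [← h2, h1, hA1_def]
  have hit2h : iteratedDeriv 2 h 0 = A2 - A1 ^ 2 := by
    have h1 : iteratedDeriv 2 E 0 = A2 := by rw [hEF_ev.iteratedDeriv_eq 2, hA2_def]
    have h2 : iteratedDeriv 2 E 0
        = deriv (fun z => Complex.exp (h z) * deriv h z) 0 := by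
      rw [it2_eq, hE_ev.deriv_eq]
    have h3 : deriv (fun z => Complex.exp (h z) * deriv h z) 0
        = deriv E 0 * deriv h 0 + E 0 * iteratedDeriv 2 h 0 := by
      rw [it2_eq]
      exact deriv_mul_pt hEan (analyticAt_deriv' (hha 0 h0mem))
    have h4 : deriv E 0 = A1 := by rw [hEF_ev.deriv_eq, hA1_def]
    have h5 : E 0 = 1 := by rw [hEdef]; simp only; rw [hh0, Complex.exp_zero]
    rw [h2, h3, h4, h5, hderivh, one_mul] at h1
    linear_combination h1
  -- final computation
  have hlc : logCoeff h 2 = (ep - dp ^ 2) / 12 + (eq' / 2) / 12 + dp ^ 2 / 48 := by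
    rw [logCoeff, hit2h]
    have hA1v : A1 = dp / 2 := by linear_combination hA1 / 2
    have hA2v : A2 = (ep + eq' / 2) / 3 := by linear_combination hA2 / 3
    rw [hA1v, hA2v]
    norm_num [Nat.factorial]
    ring
  rw [hlc]
  have hn1 : ‖(ep - dp ^ 2) / 12 + (eq' / 2) / 12 + dp ^ 2 / 48‖
      ≤ ‖ep - dp ^ 2‖ / 12 + ‖eq'‖ / 24 + ‖dp‖ ^ 2 / 48 := by
    calc ‖(ep - dp ^ 2) / 12 + (eq' / 2) / 12 + dp ^ 2 / 48‖
        ≤ ‖(ep - dp ^ 2) / 12 + (eq' / 2) / 12‖ + ‖dp ^ 2 / 48‖ := norm_add_le _ _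
      _ ≤ ‖(ep - dp ^ 2) / 12‖ + ‖(eq' / 2) / 12‖ + ‖dp ^ 2 / 48‖ := by
          gcongr
          exact norm_add_le _ _
      _ = ‖ep - dp ^ 2‖ / 12 + ‖eq'‖ / 24 + ‖dp‖ ^ 2 / 48 := by
          simp [norm_div, norm_pow]
          ring
  have hq4 : ‖eq'‖ ≤ 4 := by
    rw [hdq0] at hqbound
    simpa using hqbound
  have hdpn : (0:ℝ) ≤ ‖dp‖ ^ 2 := by positivity
  calc ‖(ep - dp ^ 2) / 12 + (eq' / 2) / 12 + dp ^ 2 / 48‖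
      ≤ ‖ep - dp ^ 2‖ / 12 + ‖eq'‖ / 24 + ‖dp‖ ^ 2 / 48 := hn1
    _ ≤ (4 - ‖dp‖ ^ 2) / 12 + 4 / 24 + ‖dp‖ ^ 2 / 48 := by gcongr
    _ ≤ 1 / 2 := by linarith
end

section
/- The bound |γ₁| ≤ 1/2 on the class ℱ is sharp: the function f analytic on 𝔻 determined by f(0) = 0 and z f'(z) = g(z)·P(z), where g(z) = z/(1 − z²) and P(z) = (1 + z)/(1 − z), belongs to ℱ and satisfies |γ₁| = 1/2. -/
open Complex Metric

lemma aux_ne {z : ℂ} (hz : z ∈ ball (0:ℂ) 1) :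
    1 - z ≠ 0 ∧ 1 + z ≠ 0 ∧ 1 - z ^ 2 ≠ 0 := by
  rw [mem_ball_zero_iff] at hz
  have h1 : 1 - z ≠ 0 := by
    intro h
    rw [sub_eq_zero] at h
    rw [← h] at hz
    simp at hz
  have h2 : 1 + z ≠ 0 := by
    intro h
    have : z = -1 := by linear_combination h
    rw [this] at hz
    simp at hz
  refine ⟨h1, h2, ?_⟩
  have : 1 - z ^ 2 = (1 - z) * (1 + z) := by ring
  rw [this]
  exact mul_ne_zero h1 h2

lemma re_pos_frac {w : ℂ} (hw : ‖w‖ < 1) : 0 < ((1 + w) / (1 - w)).re := by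
  have hns : Complex.normSq w < 1 := by
    have := Complex.sq_norm w
    nlinarith [norm_nonneg w]
  have hb : (1 : ℂ) - w ≠ 0 := by
    intro h
    rw [sub_eq_zero] at h
    rw [← h] at hw
    simp at hw
  have hpos : 0 < Complex.normSq (1 - w) := Complex.normSq_pos.2 hb
  have hre : ((1 + w) / (1 - w)).re = (1 - Complex.normSq w) / Complex.normSq (1 - w) := by
    rw [Complex.div_re]
    simp only [Complex.add_re, Complex.add_im, Complex.sub_re, Complex.sub_im,
      Complex.one_re, Complex.one_im, Complex.normSq_apply]
    ring
  rw [hre]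
  exact div_pos (by linarith) hpos

lemma hasDerivAt_K {z : ℂ} (hz : 1 - z ≠ 0) :
    HasDerivAt (fun w : ℂ => w / (1 - w)) (1 / (1 - z) ^ 2) z := by
  have h := (hasDerivAt_id z).div ((hasDerivAt_id z).const_sub 1) hz
  refine h.congr_deriv ?_
  simp only [id]
  ring

lemma hasDerivAt_g {z : ℂ} (hz : 1 - z ^ 2 ≠ 0) :
    HasDerivAt (fun w : ℂ => w / (1 - w ^ 2)) ((1 + z ^ 2) / (1 - z ^ 2) ^ 2) z := by
  have hsq : HasDerivAt (fun w : ℂ => 1 - w ^ 2) (-(2 * z)) z := by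
    simpa using ((hasDerivAt_pow 2 z).const_sub 1)
  have h := (hasDerivAt_id z).div hsq hz
  refine h.congr_deriv ?_
  simp only [id]
  ring

/-- Sharpness of `|γ₁| ≤ 1/2` on ℱ: the function `f` with `f 0 = 0` and
`z f'(z) = (z/(1-z²)) · ((1+z)/(1-z))` belongs to ℱ and satisfies `|γ₁| = 1/2`. -/
theorem abs_gamma_one_sharp (f : ℂ → ℂ)
    (hf : AnalyticOnNhd ℂ f (ball (0:ℂ) 1)) (hf0 : f 0 = 0)
    (hode : ∀ z ∈ ball (0:ℂ) 1,
      z * deriv f z = (z / (1 - z ^ 2)) * ((1 + z) / (1 - z))) :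
    MemClassF f ∧ ∀ h : ℂ → ℂ, IsLogBranch f h → ‖logCoeff h 1‖ = 1 / 2 := by
  have hmem0 : (0 : ℂ) ∈ ball (0:ℂ) 1 := by simp
  have habs : ∀ z ∈ ball (0:ℂ) 1, ‖z‖ < 1 := by
    intro z hz
    rwa [mem_ball_zero_iff] at hz
  -- f' agrees with 1/(1-z)^2 on the punctured ball
  have hpunct : ∀ z ∈ ball (0:ℂ) 1, z ≠ 0 → deriv f z = 1 / (1 - z) ^ 2 := by
    intro z hz hz0
    obtain ⟨h1, h2, h3⟩ := aux_ne hz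
    have := hode z hz
    have hr : (z / (1 - z ^ 2)) * ((1 + z) / (1 - z)) = z * (1 / (1 - z) ^ 2) := by
      field_simp
      ring
    rw [hr] at this
    exact mul_left_cancel₀ hz0 this
  -- identity theorem: f' = 1/(1-z)^2 on the whole ball
  have hG : AnalyticOnNhd ℂ (fun z : ℂ => 1 / (1 - z) ^ 2) (ball (0:ℂ) 1) := by
    intro z hz
    have h1 := (aux_ne hz).1
    exact (analyticAt_const.div (((analyticAt_const.sub analyticAt_id)).pow 2)
      (pow_ne_zero 2 h1))
  have hfreq : ∃ᶠ z in nhdsWithin (0:ℂ) {(0:ℂ)}ᶜ, deriv f z = 1 / (1 - z) ^ 2 := by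
    apply Filter.Eventually.frequently
    filter_upwards [nhdsWithin_le_nhds (isOpen_ball.mem_nhds hmem0),
      self_mem_nhdsWithin] with z hz hz0
    exact hpunct z hz hz0
  have hderiv : Set.EqOn (deriv f) (fun z : ℂ => 1 / (1 - z) ^ 2) (ball (0:ℂ) 1) :=
    (hf.deriv).eqOn_of_preconnected_of_frequently_eq hG
      (convex_ball (0:ℂ) 1).isPreconnected hmem0 hfreq
  have hderiv0 : deriv f 0 = 1 := by
    have := hderiv hmem0
    simpa using this
  -- f = z/(1-z) on the ball
  have hfeq : Set.EqOn f (fun z : ℂ => z / (1 - z)) (ball (0:ℂ) 1) := by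
    apply Convex.eqOn_of_fderivWithin_eq (convex_ball (0:ℂ) 1)
      (hf.differentiableOn) ?hg isOpen_ball.uniqueDiffOn ?heq hmem0 (by simpa using hf0)
    case hg =>
      intro z hz
      exact (hasDerivAt_K (aux_ne hz).1).differentiableAt.differentiableWithinAt
    case heq =>
      intro z hz
      rw [fderivWithin_of_isOpen isOpen_ball hz, fderivWithin_of_isOpen isOpen_ball hz]
      have hK := (hasDerivAt_K (aux_ne hz).1)
      have hfz : HasDerivAt f (1 / (1 - z) ^ 2) z := by
        have := (hf z hz).differentiableAt.hasDerivAt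
        rwa [hderiv hz] at this
      rw [hfz.hasFDerivAt.fderiv, hK.hasFDerivAt.fderiv]
  constructor
  · -- MemClassF f
    refine ⟨hf, hf0, hderiv0, fun z => z / (1 - z ^ 2), ⟨?_, by simp, ?_, ?_, ?_⟩, ?_⟩
    · intro z hz
      exact (analyticAt_id.div (analyticAt_const.sub (analyticAt_id.pow 2)) (aux_ne hz).2.2)
    · have := (hasDerivAt_g (z := (0:ℂ)) (by norm_num)).deriv
      rw [this]; norm_num
    · intro z hz hz0
      obtain ⟨h1, h2, h3⟩ := aux_ne hz
      rw [(hasDerivAt_g h3).deriv]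
      have hr : z * ((1 + z ^ 2) / (1 - z ^ 2) ^ 2) / (z / (1 - z ^ 2))
          = (1 + z ^ 2) / (1 - z ^ 2) := by
        field_simp
      rw [hr]
      have habs2 : ‖z ^ 2‖ < 1 := by
        rw [norm_pow]
        have := habs z hz
        nlinarith [norm_nonneg z]
      exact re_pos_frac habs2
    · intro z hz
      simp only [neg_sq, neg_div]
    · intro z hz hz0
      obtain ⟨h1, h2, h3⟩ := aux_ne hz
      rw [hode z hz, mul_comm (z / (1 - z ^ 2)), mul_div_assoc,
        div_self (div_ne_zero hz0 h3), mul_one]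
      exact re_pos_frac (habs z hz)
  · -- logarithmic coefficient
    rintro h ⟨hh, hh0, hhe⟩
    have key : Set.EqOn (fun z => Complex.exp (h z)) (fun z : ℂ => (1 - z)⁻¹)
        (ball (0:ℂ) 1) := by
      intro z hz
      by_cases hz0 : z = 0
      · subst hz0; simp [hh0]
      · have h1 := (aux_ne hz).1
        simp only
        rw [hhe z hz hz0, hfeq hz]
        field_simp
    have hEv : (fun z => Complex.exp (h z)) =ᶠ[nhds (0:ℂ)] (fun z : ℂ => (1 - z)⁻¹) :=
      Filter.eventuallyEq_of_mem (isOpen_ball.mem_nhds hmem0) key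
    have hd2 : HasDerivAt (fun z : ℂ => (1 - z)⁻¹) 1 0 := by
      have := (((hasDerivAt_id (0:ℂ)).const_sub 1).inv (by norm_num))
      exact this.congr_deriv (by norm_num)
    have hd1 : HasDerivAt (fun z => Complex.exp (h z)) (deriv h 0) 0 := by
      have := ((hh 0 hmem0).differentiableAt.hasDerivAt).cexp
      simpa [hh0] using this
    have hdh : deriv h 0 = 1 := by
      have e1 : deriv (fun z => Complex.exp (h z)) 0 = deriv h 0 := hd1.deriv
      have e2 : deriv (fun z : ℂ => (1 - z)⁻¹) 0 = 1 := hd2.deriv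
      rw [← e1, hEv.deriv_eq, e2]
    rw [logCoeff, iteratedDeriv_one, hdh]
    simp [norm_div]
end

section
/- Let P be in the Carathéodory class 𝒫 with Taylor expansion P(z) = 1 + ∑_{n≥1} cₙ zⁿ, and let μ be a complex number. Then |c₂ − μ c₁²| ≤ 2·max{1, |2μ − 1|}. -/
open Complex Metric

/-- The `n`-th Taylor coefficient of `P` at `0`. -/
noncomputable def taylorCoeff (P : ℂ → ℂ) (n : ℕ) : ℂ :=
  iteratedDeriv n P 0 / (n.factorial : ℂ)

/-- `P` belongs to the Carathéodory class 𝒫: analytic on the unit disk,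
`P 0 = 1`, and `Re P > 0` on the disk. -/
def MemCaratheodory (P : ℂ → ℂ) : Prop :=
  AnalyticOnNhd ℂ P (ball (0:ℂ) 1) ∧ P 0 = 1 ∧ ∀ z ∈ ball (0:ℂ) 1, 0 < (P z).re

open ComplexConjugate in
lemma coeff_eq_iteratedDeriv {f : ℂ → ℂ} {p : FormalMultilinearSeries ℂ ℂ ℂ} {x : ℂ}
    (hf : HasFPowerSeriesAt f p x) (n : ℕ) :
    p.coeff n = iteratedDeriv n f x / (n.factorial : ℂ) := by
  obtain ⟨r, hr⟩ := hf
  have h := hr.factorial_smul (y := (1:ℂ)) n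
  rw [iteratedDeriv_eq_iteratedFDeriv, ← h]
  simp only [FormalMultilinearSeries.coeff, nsmul_eq_mul]
  rw [eq_div_iff (by exact_mod_cast n.factorial_ne_zero), mul_comm]
  rfl

open ComplexConjugate in
lemma mobius_normSq (R : ℝ) (a w : ℂ) :
    Complex.normSq ((R^2 : ℝ) - conj a * w) - R^2 * Complex.normSq (w - a)
      = (R^2 - Complex.normSq a) * (R^2 - Complex.normSq w) := by
  simp only [Complex.normSq_apply, Complex.sub_re, Complex.sub_im, Complex.mul_re, Complex.mul_im,
    Complex.conj_re, Complex.conj_im, Complex.ofReal_re, Complex.ofReal_im]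
  ring

open ComplexConjugate in
lemma schur_abs_deriv_dslope {ω : ℂ → ℂ} (hd : DifferentiableOn ℂ ω (ball 0 1)) (h0 : ω 0 = 0)
    (hm : Set.MapsTo ω (ball (0:ℂ) 1) (ball (0:ℂ) 1)) :
    ‖deriv (dslope ω 0) 0‖ ≤ 1 - ‖deriv ω 0‖ ^ 2 := by
  have h0D : (0:ℂ) ∈ ball (0:ℂ) 1 := mem_ball_self one_pos
  have hm' : Set.MapsTo ω (ball (0:ℂ) 1) (ball (ω 0) 1) := by rwa [h0]
  set a1 := deriv ω 0 with ha1
  set g := dslope ω 0 with hgdef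
  have hb1 : ‖a1‖ ≤ 1 := by
    have := Complex.norm_deriv_le_div_of_mapsTo_ball hd (hm'.mono_right ball_subset_closedBall) one_pos
    simpa using this
  have hg1 : ∀ z ∈ ball (0:ℂ) 1, ‖g z‖ ≤ 1 := fun z hz => by
    simpa using Complex.norm_dslope_le_div_of_mapsTo_ball hd (hm'.mono_right ball_subset_closedBall) hz
  have hgd : DifferentiableOn ℂ g (ball 0 1) :=
    (Complex.differentiableOn_dslope (isOpen_ball.mem_nhds h0D)).mpr hd
  have hg0 : g 0 = a1 := dslope_same ω 0
  set a2 := deriv g 0 with ha2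
  have hga2 : HasDerivAt g a2 0 :=
    (hgd.differentiableAt (isOpen_ball.mem_nhds h0D)).hasDerivAt
  have hna : Complex.normSq a1 ≤ 1 := by
    rw [← Complex.sq_norm]; nlinarith [norm_nonneg a1]
  have key : ∀ R : ℝ, 1 < R → ‖a2‖ * R ≤ R^2 - Complex.normSq a1 := by
    intro R hR
    have hR2 : (1:ℝ) < R^2 := by nlinarith
    set d : ℂ → ℂ := fun z => ((R^2 : ℝ) : ℂ) - conj a1 * g z with hdd
    have hdne : ∀ z ∈ ball (0:ℂ) 1, d z ≠ 0 := by
      intro z hz h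
      have h1 : ‖conj a1 * g z‖ ≤ 1 := by
        rw [norm_mul, Complex.norm_conj]
        have := hg1 z hz
        nlinarith [norm_nonneg (g z), norm_nonneg a1]
      rw [sub_eq_zero] at h
      rw [← h, Complex.norm_of_nonneg (by positivity)] at h1
      linarith
    set h : ℂ → ℂ := fun z => (R:ℂ) * (g z - a1) / d z with hh
    have hh0 : h 0 = 0 := by simp [hh, hg0]
    have hhd : DifferentiableOn ℂ h (ball 0 1) :=
      ((differentiableOn_const _).mul (hgd.sub (differentiableOn_const _))).div
        (((differentiableOn_const _).sub ((differentiableOn_const _).mul hgd))) hdne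
    have hhm : Set.MapsTo h (ball (0:ℂ) 1) (ball (h 0) 1) := by
      rw [hh0]
      intro z hz
      have hgz := hg1 z hz
      have hngz : Complex.normSq (g z) ≤ 1 := by
        rw [← Complex.sq_norm]; nlinarith [norm_nonneg (g z)]
      have hid := mobius_normSq R a1 (g z)
      have hpos : 0 < (R^2 - Complex.normSq a1) * (R^2 - Complex.normSq (g z)) := by nlinarith
      have h2 : R^2 * Complex.normSq (g z - a1) < Complex.normSq (d z) := by
        simp only [hdd]; nlinarith [Complex.normSq_nonneg (g z - a1)]
      have h3 : ‖(R:ℂ) * (g z - a1)‖ < ‖d z‖ := by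
        have e1 : ‖(R:ℂ) * (g z - a1)‖ ^ 2 = R^2 * Complex.normSq (g z - a1) := by
          rw [Complex.sq_norm, Complex.normSq_mul, Complex.normSq_ofReal]; ring
        have e2 : ‖d z‖ ^ 2 = Complex.normSq (d z) := Complex.sq_norm _
        nlinarith [norm_nonneg ((R:ℂ) * (g z - a1)), norm_nonneg (d z)]
      rw [mem_ball, dist_zero_right]
      show ‖(R:ℂ) * (g z - a1) / d z‖ < 1
      rw [norm_div]
      rw [div_lt_one (lt_of_le_of_lt (norm_nonneg _) h3)]
      exact h3
    have hS := Complex.norm_deriv_le_div_of_mapsTo_ball hhd (hhm.mono_right ball_subset_closedBall) one_pos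
    have hdd0 : HasDerivAt d (-(conj a1 * a2)) 0 := by
      simpa using (hga2.const_mul (conj a1)).const_sub (((R^2 : ℝ)) : ℂ)
    have hnum : HasDerivAt (fun z => (R:ℂ) * (g z - a1)) ((R:ℂ) * a2) 0 := by
      simpa using (hga2.sub_const a1).const_mul (R:ℂ)
    have hdh : HasDerivAt h
        (((R:ℂ) * a2 * d 0 - (R:ℂ) * (g 0 - a1) * (-(conj a1 * a2))) / d 0 ^ 2) 0 :=
      hnum.div hdd0 (hdne 0 h0D)
    have hDpos : 0 < R^2 - Complex.normSq a1 := by nlinarith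
    have hd0v : d 0 = (((R^2 - Complex.normSq a1 : ℝ)) : ℂ) := by
      simp only [hdd, hg0]
      rw [mul_comm, Complex.mul_conj]
      push_cast
      ring
    have hXne : (((R^2 - Complex.normSq a1 : ℝ)) : ℂ) ≠ 0 := Complex.ofReal_ne_zero.mpr hDpos.ne'
    have hval : deriv h 0 = (R:ℂ) * a2 / (((R^2 - Complex.normSq a1 : ℝ)) : ℂ) := by
      rw [hdh.deriv, hd0v, hg0, sub_self, mul_zero, zero_mul, sub_zero,
        pow_two ((((R^2 - Complex.normSq a1 : ℝ)) : ℂ)), mul_div_mul_right _ _ hXne]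
    rw [hval, norm_div] at hS
    rw [show ‖(((R^2 - Complex.normSq a1 : ℝ)) : ℂ)‖ = R^2 - Complex.normSq a1 from by
      rw [Complex.norm_of_nonneg hDpos.le]] at hS
    rw [div_le_iff₀ hDpos, norm_mul,
      Complex.norm_of_nonneg (show (0:ℝ) ≤ R by linarith)] at hS
    nlinarith [hS]
  rw [Complex.sq_norm]
  refine le_of_forall_pos_le_add ?_
  intro ε hε
  have hk := key (1 + ε/2) (by linarith)
  nlinarith [norm_nonneg a2, mul_nonneg (by linarith : (0:ℝ) ≤ ε/2)
    (by linarith : (0:ℝ) ≤ 1 - Complex.normSq a1)]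

/-- For `P ∈ 𝒫` with coefficients `cₙ` and any `μ ∈ ℂ`,
`|c₂ − μ c₁²| ≤ 2 max{1, |2μ − 1|}`. -/
theorem caratheodory_fekete_szego (P : ℂ → ℂ) (hP : MemCaratheodory P) (μ : ℂ) :
    ‖taylorCoeff P 2 - μ * (taylorCoeff P 1) ^ 2‖ ≤
      2 * max 1 ‖2 * μ - 1‖ := by
  obtain ⟨hA, hP0, hRe⟩ := hP
  have h0D : (0:ℂ) ∈ ball (0:ℂ) 1 := mem_ball_self one_pos
  have hden : ∀ z ∈ ball (0:ℂ) 1, P z + 1 ≠ 0 := by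
    intro z hz hc
    have h1 := hRe z hz
    have h2 : (P z + 1).re = 0 := by rw [hc]; simp
    simp only [Complex.add_re, Complex.one_re] at h2
    linarith
  set ω : ℂ → ℂ := fun z => (P z - 1) / (P z + 1) with hωdef
  have hωA : AnalyticOnNhd ℂ ω (ball 0 1) :=
    (hA.sub analyticOnNhd_const).div (hA.add analyticOnNhd_const) hden
  have hω0 : ω 0 = 0 := by simp [hωdef, hP0]
  have hωd : DifferentiableOn ℂ ω (ball 0 1) := hωA.differentiableOn
  have hmaps : Set.MapsTo ω (ball (0:ℂ) 1) (ball (0:ℂ) 1) := by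
    intro z hz
    have h1 := hRe z hz
    have h2 : Complex.normSq (P z - 1) < Complex.normSq (P z + 1) := by
      simp only [Complex.normSq_apply, Complex.sub_re, Complex.sub_im, Complex.add_re,
        Complex.add_im, Complex.one_re, Complex.one_im]
      nlinarith
    have h3 : ‖P z - 1‖ < ‖P z + 1‖ := by
      have e1 := Complex.sq_norm (P z - 1)
      have e2 := Complex.sq_norm (P z + 1)
      nlinarith [norm_nonneg (P z - 1), norm_nonneg (P z + 1)]
    rw [mem_ball, dist_zero_right]
    show ‖(P z - 1)/(P z + 1)‖ < 1
    rw [norm_div]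
    rw [div_lt_one (lt_of_le_of_lt (norm_nonneg _) h3)]
    exact h3
  have hPd0 : HasDerivAt P (deriv P 0) 0 := (hA 0 h0D).differentiableAt.hasDerivAt
  set c1 := deriv P 0 with hc1
  set c2 := deriv (deriv P) 0 with hc2
  have hω1 : deriv ω 0 = c1 / 2 := by
    have h := (hPd0.sub_const 1).div (hPd0.add_const 1) (hden 0 h0D)
    rw [(show HasDerivAt ω _ 0 from h).deriv, hP0]
    ring
  have hF : ∀ z ∈ ball (0:ℂ) 1, HasDerivAt ω (2 * deriv P z / (P z + 1)^2) z := by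
    intro z hz
    have hPz : HasDerivAt P (deriv P z) z := (hA z hz).differentiableAt.hasDerivAt
    have h := (hPz.sub_const 1).div (hPz.add_const 1) (hden z hz)
    refine h.congr_deriv ?_
    have hne := hden z hz
    ring
  have hev : deriv ω =ᶠ[nhds (0:ℂ)] (fun z => 2 * deriv P z / (P z + 1)^2) := by
    filter_upwards [isOpen_ball.mem_nhds h0D] with z hz
    exact (hF z hz).deriv
  have hP'A : AnalyticOnNhd ℂ (deriv P) (ball 0 1) := hA.deriv
  have hP'd : HasDerivAt (deriv P) c2 0 := (hP'A 0 h0D).differentiableAt.hasDerivAt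
  have hω2 : deriv (deriv ω) 0 = (c2 - c1^2) / 2 := by
    rw [hev.deriv_eq]
    have hden2 : (P 0 + 1)^2 ≠ 0 := pow_ne_zero 2 (hden 0 h0D)
    have h := (hP'd.const_mul (2:ℂ)).div ((hPd0.add_const 1).pow 2) hden2
    rw [(show HasDerivAt (fun z => 2 * deriv P z / (P z + 1)^2) _ 0 from h).deriv]
    simp only [Pi.pow_apply, hP0, ← hc1]
    norm_num
    ring
  obtain ⟨q, hq⟩ := hωA 0 h0D
  have ha2q : deriv (dslope ω 0) 0 = q.coeff 2 := by
    have h := hq.has_fpower_series_dslope_fslope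
    rw [h.deriv]
    exact q.coeff_fslope
  have hq2 : q.coeff 2 = iteratedDeriv 2 ω 0 / 2 := by
    rw [coeff_eq_iteratedDeriv hq 2]; norm_num
  have hit2 : iteratedDeriv 2 ω 0 = deriv (deriv ω) 0 := by
    rw [iteratedDeriv_succ, iteratedDeriv_one]
  have hb2 := schur_abs_deriv_dslope hωd hω0 hmaps
  have hb1 : ‖deriv ω 0‖ ≤ 1 := by
    have hm' : Set.MapsTo ω (ball (0:ℂ) 1) (ball (ω 0) 1) := by rwa [hω0]
    simpa using Complex.norm_deriv_le_div_of_mapsTo_ball hωd (hm'.mono_right ball_subset_closedBall) one_pos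
  set a1 := deriv ω 0 with ha1def
  set A2 := deriv (dslope ω 0) 0 with hA2def
  have hA2 : A2 = (c2 - c1^2)/4 := by rw [ha2q, hq2, hit2, hω2]; ring
  have ht1 : taylorCoeff P 1 = c1 := by
    simp [taylorCoeff, iteratedDeriv_one]
    exact hc1.symm
  have ht2 : taylorCoeff P 2 = c2 / 2 := by
    rw [taylorCoeff, iteratedDeriv_succ, iteratedDeriv_one]; norm_num
    exact hc2.symm
  rw [ht1, ht2]
  have hc12 : c1 = 2 * a1 := by rw [hω1]; ring
  have hexpr : c2/2 - μ * c1^2 = 2*A2 + (1 - 2*μ) * 2 * a1^2 := by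
    rw [hA2, hc12]; ring
  rw [hexpr]
  have tri : ‖2*A2 + (1 - 2*μ) * 2 * a1^2‖ ≤
      2 * ‖A2‖ + ‖2*μ - 1‖ * 2 * ‖a1‖ ^ 2 := by
    calc ‖2*A2 + (1 - 2*μ) * 2 * a1^2‖
        ≤ ‖2*A2‖ + ‖(1 - 2*μ) * 2 * a1^2‖ := norm_add_le _ _
      _ = 2 * ‖A2‖ + ‖1 - 2*μ‖ * 2 * ‖a1‖ ^ 2 := by
          simp only [norm_mul, norm_pow, Complex.norm_two]
      _ = 2 * ‖A2‖ + ‖2*μ - 1‖ * 2 * ‖a1‖ ^ 2 := by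
          rw [norm_sub_rev]
  have ht : ‖a1‖ ^ 2 ≤ 1 := by nlinarith [norm_nonneg a1]
  have hm0 : 0 ≤ ‖2*μ - 1‖ := norm_nonneg _
  rcases le_total (‖2*μ - 1‖) 1 with hcase | hcase
  · rw [max_eq_left hcase]
    nlinarith [norm_nonneg a1, sq_nonneg (‖a1‖)]
  · rw [max_eq_right hcase]
    nlinarith [norm_nonneg a1, sq_nonneg (‖a1‖)]
end

section
/- Let P be in the Carathéodory class 𝒫 with Taylor expansion P(z) = 1 + ∑_{n≥1} cₙ zⁿ, and suppose c₁ is real with 0 ≤ c₁ ≤ 2. Then there exist complex numbers x and t with |x| ≤ 1 and |t| ≤ 1 such that 2c₂ = c₁² + x(4 − c₁²) and 4c₃ = c₁³ + 2(4 − c₁²)c₁x − c₁(4 − c₁²)x² + 2(4 − c₁²)(1 − |x|²)t. -/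
open Complex Metric Set Filter




private lemma ballO : (0:ℂ) ∈ ball (0:ℂ) 1 := mem_ball_self one_pos

/-- transfer `EqOn` through `dslope` at 0. -/
private lemma eqOn_dslope_ball {f g : ℂ → ℂ} (h : EqOn f g (ball (0:ℂ) 1)) :
    EqOn (dslope f 0) (dslope g 0) (ball (0:ℂ) 1) := by
  intro z hz
  rcases eq_or_ne z 0 with rfl | hne
  · rw [dslope_same, dslope_same]
    exact Filter.EventuallyEq.deriv_eq (h.eventuallyEq_of_mem (isOpen_ball.mem_nhds ballO))
  · rw [dslope_of_ne _ hne, dslope_of_ne _ hne, slope_def_field, slope_def_field,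
      h hz, h ballO]

private lemma dslope_mul_apply (u v : ℂ → ℂ) (hu : DifferentiableAt ℂ u 0)
    (hv : DifferentiableAt ℂ v 0) (z : ℂ) :
    dslope (fun w => u w * v w) 0 z = u z * dslope v 0 z + v 0 * dslope u 0 z := by
  rcases eq_or_ne z 0 with rfl | hne
  · rw [dslope_same, dslope_same, dslope_same, deriv_fun_mul hu hv]; ring
  · rw [dslope_of_ne _ hne, dslope_of_ne _ hne, dslope_of_ne _ hne,
      slope_def_field, slope_def_field, slope_def_field]
    field_simp
    ring

private lemma dslope_add_apply (u v : ℂ → ℂ) (hu : DifferentiableAt ℂ u 0)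
    (hv : DifferentiableAt ℂ v 0) (z : ℂ) :
    dslope (fun w => u w + v w) 0 z = dslope u 0 z + dslope v 0 z := by
  rcases eq_or_ne z 0 with rfl | hne
  · rw [dslope_same, dslope_same, dslope_same, deriv_fun_add hu hv]
  · rw [dslope_of_ne _ hne, dslope_of_ne _ hne, dslope_of_ne _ hne,
      slope_def_field, slope_def_field, slope_def_field]
    field_simp
    ring

private lemma dslope_const_mul_apply (e : ℂ) (u : ℂ → ℂ) (hu : DifferentiableAt ℂ u 0) (z : ℂ) :
    dslope (fun w => e * u w) 0 z = e * dslope u 0 z := by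
  rcases eq_or_ne z 0 with rfl | hne
  · rw [dslope_same, dslope_same, deriv_const_mul e hu]
  · rw [dslope_of_ne _ hne, dslope_of_ne _ hne, slope_def_field, slope_def_field]
    field_simp

private lemma dslope_const_add_mul_apply (c e : ℂ) (u : ℂ → ℂ)
    (hu : DifferentiableAt ℂ u 0) (z : ℂ) :
    dslope (fun w => c + e * u w) 0 z = e * dslope u 0 z := by
  rcases eq_or_ne z 0 with rfl | hne
  · rw [dslope_same, dslope_same]
    rw [deriv_const_add, deriv_const_mul e hu]
  · rw [dslope_of_ne _ hne, dslope_of_ne _ hne, slope_def_field, slope_def_field]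
    field_simp
    ring

private lemma dslope_sub_const_apply (c : ℂ) (u : ℂ → ℂ) (z : ℂ) :
    dslope (fun w => u w - c) 0 z = dslope u 0 z := by
  rcases eq_or_ne z 0 with rfl | hne
  · rw [dslope_same, dslope_same, deriv_sub_const]
  · rw [dslope_of_ne _ hne, dslope_of_ne _ hne, slope_def_field, slope_def_field]
    ring

private lemma dslope_add_const_apply (c : ℂ) (u : ℂ → ℂ) (z : ℂ) :
    dslope (fun w => u w + c) 0 z = dslope u 0 z := by
  rcases eq_or_ne z 0 with rfl | hne
  · rw [dslope_same, dslope_same, deriv_add_const]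
  · rw [dslope_of_ne _ hne, dslope_of_ne _ hne, slope_def_field, slope_def_field]
    ring

private lemma dslope_fun_const_apply (c : ℂ) (z : ℂ) :
    dslope (fun _ : ℂ => c) 0 z = 0 := by
  rcases eq_or_ne z 0 with rfl | hne
  · rw [dslope_same, deriv_const]
  · rw [dslope_of_ne _ hne, slope_def_field]
    simp

private lemma analyticAt_dslope_zero {f : ℂ → ℂ} (hf : AnalyticAt ℂ f 0) :
    AnalyticAt ℂ (dslope f 0) 0 := by
  obtain ⟨p, hp⟩ := hf
  exact ⟨p.fslope, hp.has_fpower_series_dslope_fslope⟩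

private lemma diffOn_dslope_ball {f : ℂ → ℂ} (hf : DifferentiableOn ℂ f (ball (0:ℂ) 1))
    (hfa : AnalyticAt ℂ f 0) : DifferentiableOn ℂ (dslope f 0) (ball (0:ℂ) 1) := by
  intro z hz
  rcases eq_or_ne z 0 with rfl | hne
  · exact (analyticAt_dslope_zero hfa).differentiableAt.differentiableWithinAt
  · exact (differentiableWithinAt_dslope_of_ne hne).2 (hf z hz)

private lemma mobius_normSq_lt {w u : ℂ} (hw : ‖w‖ < 1) (hu : ‖u‖ < 1) :
    Complex.normSq (u - w) < Complex.normSq (1 - (starRingEnd ℂ) w * u) := by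
  have hw2 : w.re ^ 2 + w.im ^ 2 < 1 := by
    have := Complex.sq_norm w
    nlinarith [pow_lt_one₀ (norm_nonneg w) hw (two_ne_zero), Complex.normSq_apply w]
  have hu2 : u.re ^ 2 + u.im ^ 2 < 1 := by
    have := Complex.sq_norm u
    nlinarith [pow_lt_one₀ (norm_nonneg u) hu (two_ne_zero), Complex.normSq_apply u]
  simp only [Complex.normSq_apply, Complex.sub_re, Complex.sub_im, Complex.mul_re,
    Complex.mul_im, Complex.conj_re, Complex.conj_im, Complex.one_re, Complex.one_im]
  nlinarith [mul_pos (sub_pos.2 hw2) (sub_pos.2 hu2)]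

private lemma mobius_ne {w u : ℂ} (hw : ‖w‖ < 1) (hu : ‖u‖ < 1) :
    1 - (starRingEnd ℂ) w * u ≠ 0 := by
  intro h
  have := mobius_normSq_lt hw hu
  rw [h] at this
  simp only [map_zero] at this
  exact absurd this (not_lt.2 (Complex.normSq_nonneg _))

private lemma mobius_abs_lt {w u : ℂ} (hw : ‖w‖ < 1) (hu : ‖u‖ < 1) :
    ‖(u - w) / (1 - (starRingEnd ℂ) w * u)‖ < 1 := by
  rw [norm_div, div_lt_one (norm_pos_iff.mpr (mobius_ne hw hu))]
  have h := mobius_normSq_lt hw hu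
  have h1 : ‖u - w‖ ^ 2 < ‖1 - (starRingEnd ℂ) w * u‖ ^ 2 := by
    rw [Complex.sq_norm, Complex.sq_norm]; exact h
  exact lt_of_pow_lt_pow_left₀ 2 (norm_nonneg _) h1

/-- constancy from attained max modulus -/
private lemma eq_const_of_abs_eq_one {f : ℂ → ℂ} (hd : DifferentiableOn ℂ f (ball (0:ℂ) 1))
    (hb : ∀ z ∈ ball (0:ℂ) 1, ‖f z‖ ≤ 1) {z₀ : ℂ} (hz₀ : z₀ ∈ ball (0:ℂ) 1)
    (h1 : ‖f z₀‖ = 1) : ∀ z ∈ ball (0:ℂ) 1, f z = f z₀ := by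
  have hmax : IsMaxOn (norm ∘ f) (ball (0:ℂ) 1) z₀ := by
    intro z hz
    simp only [Function.comp_apply, h1]
    exact hb z hz
  exact fun z hz => Complex.eqOn_of_isPreconnected_of_isMaxOn_norm
    (convex_ball (0:ℂ) 1).isPreconnected isOpen_ball hd hz₀ hmax hz

/-- Schwarz–Pick at the origin. -/
private lemma sp_zero {f : ℂ → ℂ} (hd : DifferentiableOn ℂ f (ball (0:ℂ) 1))
    (hb : ∀ z ∈ ball (0:ℂ) 1, ‖f z‖ ≤ 1) :
    ‖deriv f 0‖ ≤ 1 - ‖f 0‖ ^ 2 := by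
  by_cases hstrict : ∀ z ∈ ball (0:ℂ) 1, ‖f z‖ < 1
  · have hf0 : ‖f 0‖ < 1 := hstrict 0 ballO
    have hfd : DifferentiableAt ℂ f 0 := hd.differentiableAt (isOpen_ball.mem_nhds ballO)
    set u : ℂ → ℂ := fun z => (f z - f 0) / (1 - (starRingEnd ℂ) (f 0) * f z) with hu_def
    have hu0 : u 0 = 0 := by simp [hu_def]
    have hden : ∀ z ∈ ball (0:ℂ) 1, 1 - (starRingEnd ℂ) (f 0) * f z ≠ 0 :=
      fun z hz => mobius_ne hf0 (hstrict z hz)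
    have hud : DifferentiableOn ℂ u (ball (0:ℂ) 1) := by
      apply DifferentiableOn.div
      · exact hd.sub_const _
      · exact (differentiableOn_const _).sub ((differentiableOn_const _).mul hd)
      · exact hden
    have hmaps : MapsTo u (ball (0:ℂ) 1) (ball (u 0) 1) := by
      rw [hu0]
      intro z hz
      rw [mem_ball_zero_iff]
      exact mobius_abs_lt hf0 (hstrict z hz)
    have hsch := Complex.norm_dslope_le_div_of_mapsTo_ball hud (hmaps.mono_right ball_subset_closedBall) ballO
    rw [dslope_same] at hsch
    have hderiv : deriv u 0 = deriv f 0 / (1 - (starRingEnd ℂ) (f 0) * f 0) := by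
      rw [hu_def]
      rw [deriv_fun_div (hfd.sub_const _)
        ((hfd.const_mul _).const_sub _)
        (hden 0 ballO)]
      rw [deriv_sub_const, deriv_const_sub, deriv_const_mul _ hfd]
      field_simp [hden 0 ballO]
      ring
    have hd0 : (1 - (starRingEnd ℂ) (f 0) * f 0) = ((1 - Complex.normSq (f 0) : ℝ) : ℂ) := by
      rw [mul_comm, Complex.mul_conj]
      push_cast
      ring
    have hpos : (0:ℝ) < 1 - Complex.normSq (f 0) := by
      rw [← Complex.sq_norm]
      nlinarith [norm_nonneg (f 0)]
    have habs : ‖deriv u 0‖ =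
        ‖deriv f 0‖ / (1 - Complex.normSq (f 0)) := by
      rw [hderiv, norm_div, hd0, Complex.norm_of_nonneg hpos.le]
    rw [habs] at hsch
    norm_num at hsch
    have h2 := (div_le_one hpos).1 hsch
    rw [← Complex.sq_norm] at h2
    linarith
  · push_neg at hstrict
    obtain ⟨z₀, hz₀, h1le⟩ := hstrict
    have habs1 : ‖f z₀‖ = 1 := le_antisymm (hb _ hz₀) h1le
    have hconst := eq_const_of_abs_eq_one hd hb hz₀ habs1
    have hev : f =ᶠ[nhds (0:ℂ)] (fun _ => f z₀) :=
      Filter.eventuallyEq_of_mem (isOpen_ball.mem_nhds ballO) hconst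
    have hder0 : deriv f 0 = 0 := by rw [hev.deriv_eq, deriv_const]
    have hf0 : f 0 = f z₀ := hconst 0 ballO
    rw [hder0, norm_zero, hf0, habs1]
    norm_num


/-- Libera–Złotkiewicz: for `P ∈ 𝒫` with `c₁` real and `0 ≤ c₁ ≤ 2`, there exist
`x, t ∈ ℂ` with `|x| ≤ 1`, `|t| ≤ 1` such that `2c₂ = c₁² + x(4 − c₁²)` and
`4c₃ = c₁³ + 2(4 − c₁²)c₁x − c₁(4 − c₁²)x² + 2(4 − c₁²)(1 − |x|²)t`. -/
theorem caratheodory_coeff_repr (P : ℂ → ℂ) (hP : MemCaratheodory P)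
    (hc₁re : (taylorCoeff P 1).im = 0) (hc₁0 : 0 ≤ (taylorCoeff P 1).re)
    (hc₁2 : (taylorCoeff P 1).re ≤ 2) :
    ∃ x t : ℂ, ‖x‖ ≤ 1 ∧ ‖t‖ ≤ 1 ∧
      2 * taylorCoeff P 2 = (taylorCoeff P 1) ^ 2 + x * (4 - (taylorCoeff P 1) ^ 2) ∧
      4 * taylorCoeff P 3 = (taylorCoeff P 1) ^ 3
        + 2 * (4 - (taylorCoeff P 1) ^ 2) * (taylorCoeff P 1) * x
        - (taylorCoeff P 1) * (4 - (taylorCoeff P 1) ^ 2) * x ^ 2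
        + 2 * (4 - (taylorCoeff P 1) ^ 2) * (1 - ((‖x‖ : ℝ) : ℂ) ^ 2) * t := by
  obtain ⟨hPa, hP0, hPre⟩ := hP
  obtain ⟨p, hp⟩ := hPa 0 ballO
  have hPa0 : AnalyticAt ℂ P 0 := ⟨p, hp⟩
  -- link taylorCoeff with power series coefficients
  have hkey : ∀ n, taylorCoeff P n = p.coeff n := by
    intro n
    obtain ⟨r, hr⟩ := hp
    have h1 := hr.factorial_smul (1:ℂ) n
    simp only [taylorCoeff, iteratedDeriv_eq_iteratedFDeriv, ← h1,
      FormalMultilinearSeries.apply_eq_pow_smul_coeff, one_pow, one_smul, nsmul_eq_mul]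
    rw [mul_comm, mul_div_assoc, div_self (Nat.cast_ne_zero.mpr n.factorial_ne_zero), mul_one]
  have e0 : ∀ (g : ℂ → ℂ) (s : FormalMultilinearSeries ℂ ℂ ℂ),
      HasFPowerSeriesAt g s 0 → g 0 = s.coeff 0 := fun g s hs => (hs.coeff_zero 1).symm
  have hp1 := hp.has_fpower_series_dslope_fslope
  have hp2 := hp1.has_fpower_series_dslope_fslope
  have hp3 := hp2.has_fpower_series_dslope_fslope
  have hco1 : taylorCoeff P 1 = dslope P 0 0 := by
    rw [hkey 1, e0 _ _ hp1, FormalMultilinearSeries.coeff_fslope]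
  have hco2 : taylorCoeff P 2 = dslope (dslope P 0) 0 0 := by
    rw [hkey 2, e0 _ _ hp2, FormalMultilinearSeries.coeff_fslope,
      FormalMultilinearSeries.coeff_fslope]
  have hco3 : taylorCoeff P 3 = dslope (dslope (dslope P 0) 0) 0 0 := by
    rw [hkey 3, e0 _ _ hp3, FormalMultilinearSeries.coeff_fslope,
      FormalMultilinearSeries.coeff_fslope, FormalMultilinearSeries.coeff_fslope]
  -- the Schur function ω
  have hne : ∀ z ∈ ball (0:ℂ) 1, P z + 1 ≠ 0 := by
    intro z hz h
    have h1 := hPre z hz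
    have h2 : (P z + 1).re = 0 := by rw [h]; simp
    rw [Complex.add_re, Complex.one_re] at h2
    linarith
  set ω : ℂ → ℂ := fun z => (P z - 1) / (P z + 1) with hω_def
  have hω0 : ω 0 = 0 := by rw [hω_def]; simp [hP0]
  have hωA : AnalyticOnNhd ℂ ω (ball (0:ℂ) 1) :=
    (hPa.sub analyticOnNhd_const).div (hPa.add analyticOnNhd_const) hne
  have hωa0 : AnalyticAt ℂ ω 0 := hωA 0 ballO
  have hωlt : ∀ z ∈ ball (0:ℂ) 1, ‖ω z‖ < 1 := by
    intro z hz
    have hre := hPre z hz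
    rw [hω_def]
    simp only [norm_div]
    rw [div_lt_one (norm_pos_iff.mpr (hne z hz))]
    have h2 : ‖P z - 1‖ ^ 2 < ‖P z + 1‖ ^ 2 := by
      rw [Complex.sq_norm, Complex.sq_norm]
      simp only [Complex.normSq_apply, Complex.sub_re, Complex.sub_im, Complex.add_re,
        Complex.add_im, Complex.one_re, Complex.one_im]
      nlinarith
    exact lt_of_pow_lt_pow_left₀ 2 (norm_nonneg _) h2
  -- analyticity / differentiability of the dslope towers
  have hω1a : AnalyticAt ℂ (dslope ω 0) 0 := analyticAt_dslope_zero hωa0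
  have hω2a : AnalyticAt ℂ (dslope (dslope ω 0) 0) 0 := analyticAt_dslope_zero hω1a
  have hω3a : AnalyticAt ℂ (dslope (dslope (dslope ω 0) 0) 0) 0 := analyticAt_dslope_zero hω2a
  have hP1a : AnalyticAt ℂ (dslope P 0) 0 := analyticAt_dslope_zero hPa0
  have hP2a : AnalyticAt ℂ (dslope (dslope P 0) 0) 0 := analyticAt_dslope_zero hP1a
  have hωd : DifferentiableOn ℂ ω (ball (0:ℂ) 1) := hωA.differentiableOn
  have hω1d : DifferentiableOn ℂ (dslope ω 0) (ball (0:ℂ) 1) := diffOn_dslope_ball hωd hωa0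
  -- level identities for P
  have hEq0 : EqOn (fun z => P z - 1) (fun z => ω z * (P z + 1)) (ball (0:ℂ) 1) := by
    intro z hz
    exact (div_mul_cancel₀ _ (hne z hz)).symm
  have hE1 : EqOn (dslope P 0)
      (fun z => ω z * dslope P 0 z + 2 * dslope ω 0 z) (ball (0:ℂ) 1) := by
    intro z hz
    calc dslope P 0 z = dslope (fun w => P w - 1) 0 z := (dslope_sub_const_apply 1 P z).symm
      _ = dslope (fun w => ω w * (P w + 1)) 0 z := eqOn_dslope_ball hEq0 hz
      _ = ω z * dslope (fun w => P w + 1) 0 z + (P 0 + 1) * dslope ω 0 z :=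
          dslope_mul_apply _ _ hωa0.differentiableAt (hPa0.differentiableAt.add_const 1) z
      _ = ω z * dslope P 0 z + 2 * dslope ω 0 z := by
          rw [dslope_add_const_apply 1 P z, hP0]; norm_num
  have hE2 : EqOn (dslope (dslope P 0) 0)
      (fun z => ω z * dslope (dslope P 0) 0 z +
        (dslope P 0 0 * dslope ω 0 z + 2 * dslope (dslope ω 0) 0 z)) (ball (0:ℂ) 1) := by
    intro z hz
    calc dslope (dslope P 0) 0 z
        = dslope (fun w => ω w * dslope P 0 w + 2 * dslope ω 0 w) 0 z :=
          eqOn_dslope_ball hE1 hz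
      _ = dslope (fun w => ω w * dslope P 0 w) 0 z + dslope (fun w => 2 * dslope ω 0 w) 0 z :=
          dslope_add_apply _ _ (hωa0.differentiableAt.mul hP1a.differentiableAt)
            (hω1a.differentiableAt.const_mul 2) z
      _ = (ω z * dslope (dslope P 0) 0 z + dslope P 0 0 * dslope ω 0 z) +
          2 * dslope (dslope ω 0) 0 z := by
          rw [dslope_mul_apply _ _ hωa0.differentiableAt hP1a.differentiableAt z,
            dslope_const_mul_apply 2 _ hω1a.differentiableAt z]
      _ = _ := by ring
  have hE3 : EqOn (dslope (dslope (dslope P 0) 0) 0)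
      (fun z => ω z * dslope (dslope (dslope P 0) 0) 0 z +
        (dslope (dslope P 0) 0 0 * dslope ω 0 z +
          (dslope P 0 0 * dslope (dslope ω 0) 0 z + 2 * dslope (dslope (dslope ω 0) 0) 0 z)))
      (ball (0:ℂ) 1) := by
    intro z hz
    calc dslope (dslope (dslope P 0) 0) 0 z
        = dslope (fun w => ω w * dslope (dslope P 0) 0 w +
            (dslope P 0 0 * dslope ω 0 w + 2 * dslope (dslope ω 0) 0 w)) 0 z :=
          eqOn_dslope_ball hE2 hz
      _ = dslope (fun w => ω w * dslope (dslope P 0) 0 w) 0 z +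
          dslope (fun w => dslope P 0 0 * dslope ω 0 w + 2 * dslope (dslope ω 0) 0 w) 0 z :=
          dslope_add_apply _ _ (hωa0.differentiableAt.mul hP2a.differentiableAt)
            ((hω1a.differentiableAt.const_mul _).add (hω2a.differentiableAt.const_mul 2)) z
      _ = dslope (fun w => ω w * dslope (dslope P 0) 0 w) 0 z +
          (dslope (fun w => dslope P 0 0 * dslope ω 0 w) 0 z +
            dslope (fun w => 2 * dslope (dslope ω 0) 0 w) 0 z) := by
          rw [dslope_add_apply _ _ (hω1a.differentiableAt.const_mul _)
            (hω2a.differentiableAt.const_mul 2) z]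
      _ = (ω z * dslope (dslope (dslope P 0) 0) 0 z +
            dslope (dslope P 0) 0 0 * dslope ω 0 z) +
          (dslope P 0 0 * dslope (dslope ω 0) 0 z +
            2 * dslope (dslope (dslope ω 0) 0) 0 z) := by
          rw [dslope_mul_apply _ _ hωa0.differentiableAt hP2a.differentiableAt z,
            dslope_const_mul_apply _ _ hω1a.differentiableAt z,
            dslope_const_mul_apply 2 _ hω2a.differentiableAt z]
      _ = _ := by ring
  -- values
  have vc1 : dslope P 0 0 = 2 * dslope ω 0 0 := by
    have := hE1 ballO
    simp only [hω0, zero_mul, zero_add] at this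
    exact this
  have vc2 : dslope (dslope P 0) 0 0 =
      dslope P 0 0 * dslope ω 0 0 + 2 * dslope (dslope ω 0) 0 0 := by
    have := hE2 ballO
    simp only [hω0, zero_mul, zero_add] at this
    exact this
  have vc3 : dslope (dslope (dslope P 0) 0) 0 0 =
      dslope (dslope P 0) 0 0 * dslope ω 0 0 +
        (dslope P 0 0 * dslope (dslope ω 0) 0 0 +
          2 * dslope (dslope (dslope ω 0) 0) 0 0) := by
    have := hE3 ballO
    simp only [hω0, zero_mul, zero_add] at this
    exact this
  -- Schwarz: |dslope ω 0| ≤ 1 on the ball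
  have hω1le : ∀ z ∈ ball (0:ℂ) 1, ‖dslope ω 0 z‖ ≤ 1 := by
    intro z hz
    have hmaps : MapsTo ω (ball (0:ℂ) 1) (ball (ω 0) 1) := by
      rw [hω0]
      intro y hy
      rw [mem_ball_zero_iff]
      exact hωlt y hy
    have := Complex.norm_dslope_le_div_of_mapsTo_ball hωd (hmaps.mono_right ball_subset_closedBall) hz
    linarith [this]
  set a := dslope ω 0 0 with ha_def
  set b := dslope (dslope ω 0) 0 0 with hb_def
  set d := dslope (dslope (dslope ω 0) 0) 0 0 with hd_def
  -- a = ω₁ is real, 0 ≤ a ≤ 1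
  have haval : taylorCoeff P 1 = 2 * a := by rw [hco1, vc1]
  have haim : a.im = 0 := by
    have := hc₁re
    rw [haval] at this
    simp only [Complex.mul_im] at this
    norm_num at this
    exact this
  have hare0 : 0 ≤ a.re := by
    have := hc₁0
    rw [haval] at this
    simp only [Complex.mul_re] at this
    norm_num at this
    linarith
  have hare1 : a.re ≤ 1 := by
    have := hc₁2
    rw [haval] at this
    simp only [Complex.mul_re] at this
    norm_num at this
    linarith
  by_cases ha1 : a = 1
  · -- boundary case: ω₁ = 1, ω(z) = z
    have habs1 : ‖dslope ω 0 0‖ = 1 := by rw [← ha_def, ha1]; norm_num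
    have hcst := eq_const_of_abs_eq_one hω1d hω1le ballO habs1
    have hcst' : EqOn (dslope ω 0) (fun _ => dslope ω 0 0) (ball (0:ℂ) 1) :=
      fun z hz => hcst z hz
    have hb0 : b = 0 := by
      have h1 := eqOn_dslope_ball hcst' ballO
      rw [dslope_fun_const_apply (dslope ω 0 0) 0] at h1
      exact h1
    have h2cst : EqOn (dslope (dslope ω 0) 0) (fun _ => (0:ℂ)) (ball (0:ℂ) 1) := by
      intro z hz
      have h1 := eqOn_dslope_ball hcst' hz
      rw [dslope_fun_const_apply (dslope ω 0 0) z] at h1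
      exact h1
    have hd0 : d = 0 := by
      have h1 := eqOn_dslope_ball h2cst ballO
      rw [dslope_fun_const_apply 0 0] at h1
      exact h1
    refine ⟨0, 0, by norm_num, by norm_num, ?_, ?_⟩
    · rw [hco2, hco1, vc2, vc1, hb0, ha1]; norm_num
    · rw [hco3, hco1, vc3, vc2, vc1, hb0, hd0, ha1]; norm_num
  · -- main case: |a| < 1
    have haabs : ‖a‖ < 1 := by
      have haeq : a = ((a.re : ℝ) : ℂ) := by
        apply Complex.ext <;> simp [haim]
      have hlt : a.re < 1 := by
        rcases lt_or_eq_of_le hare1 with h | h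
        · exact h
        · exact absurd (by rw [haeq, h]; norm_num : a = 1) ha1
      rw [haeq, Complex.norm_of_nonneg hare0]
      exact hlt
    have hω1lt : ∀ z ∈ ball (0:ℂ) 1, ‖dslope ω 0 z‖ < 1 := by
      by_cases hs : ∀ z ∈ ball (0:ℂ) 1, ‖dslope ω 0 z‖ < 1
      · exact hs
      · exfalso
        push_neg at hs
        obtain ⟨z₀, hz₀, hge⟩ := hs
        have habs1 : ‖dslope ω 0 z₀‖ = 1 := le_antisymm (hω1le _ hz₀) hge
        have hconst := eq_const_of_abs_eq_one hω1d hω1le hz₀ habs1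
        have h0 := hconst 0 ballO
        rw [← h0] at habs1
        have hA : ‖a‖ = 1 := habs1
        linarith
    have hconj : (starRingEnd ℂ) a = a := Complex.conj_eq_iff_im.2 haim
    have hden : ∀ z ∈ ball (0:ℂ) 1, 1 - a * dslope ω 0 z ≠ 0 := by
      intro z hz
      have := mobius_ne haabs (hω1lt z hz)
      rwa [hconj] at this
    set h : ℂ → ℂ := fun z => (dslope ω 0 z - a) / (1 - a * dslope ω 0 z) with hh_def
    have hh0 : h 0 = 0 := by
      show (dslope ω 0 0 - a) / (1 - a * dslope ω 0 0) = 0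
      rw [← ha_def]
      simp
    have hhlt : ∀ z ∈ ball (0:ℂ) 1, ‖h z‖ < 1 := by
      intro z hz
      have := mobius_abs_lt haabs (hω1lt z hz)
      rw [hconj] at this
      exact this
    have hhd : DifferentiableOn ℂ h (ball (0:ℂ) 1) :=
      (hω1d.sub (differentiableOn_const _)).div
        ((differentiableOn_const _).sub ((differentiableOn_const _).mul hω1d)) hden
    have hha0 : AnalyticAt ℂ h 0 :=
      (hω1a.sub analyticAt_const).div
        (analyticAt_const.sub (analyticAt_const.mul hω1a)) (hden 0 ballO)
    have hh1a : AnalyticAt ℂ (dslope h 0) 0 := analyticAt_dslope_zero hha0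
    have hh2a : AnalyticAt ℂ (dslope (dslope h 0) 0) 0 := analyticAt_dslope_zero hh1a
    have hh1d : DifferentiableOn ℂ (dslope h 0) (ball (0:ℂ) 1) := diffOn_dslope_ball hhd hha0
    have hh1le : ∀ z ∈ ball (0:ℂ) 1, ‖dslope h 0 z‖ ≤ 1 := by
      intro z hz
      have hmaps : MapsTo h (ball (0:ℂ) 1) (ball (h 0) 1) := by
        rw [hh0]
        intro y hy
        rw [mem_ball_zero_iff]
        exact hhlt y hy
      have := Complex.norm_dslope_le_div_of_mapsTo_ball hhd (hmaps.mono_right ball_subset_closedBall) hz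
      linarith
    set x := dslope h 0 0 with hx_def
    have hxle : ‖x‖ ≤ 1 := hh1le 0 ballO
    have hsp : ‖dslope (dslope h 0) 0 0‖ ≤ 1 - ‖x‖ ^ 2 := by
      have := sp_zero hh1d hh1le
      rw [← dslope_same (dslope h 0) 0] at this
      exact this
    set h₂ := dslope (dslope h 0) 0 0 with hh2_def
    -- Möbius functional equation, two dslope levels
    have hEh0 : EqOn (fun z => dslope ω 0 z - a)
        (fun z => h z * (1 + (-a) * dslope ω 0 z)) (ball (0:ℂ) 1) := by
      intro z hz
      have hrw : (1 + (-a) * dslope ω 0 z) = (1 - a * dslope ω 0 z) := by ring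
      show dslope ω 0 z - a = h z * (1 + (-a) * dslope ω 0 z)
      rw [hrw]
      exact (div_mul_cancel₀ _ (hden z hz)).symm
    have hEh1 : EqOn (dslope (dslope ω 0) 0)
        (fun z => h z * ((-a) * dslope (dslope ω 0) 0 z) + (1 + (-a) * a) * dslope h 0 z)
        (ball (0:ℂ) 1) := by
      intro z hz
      calc dslope (dslope ω 0) 0 z
          = dslope (fun w => dslope ω 0 w - a) 0 z := (dslope_sub_const_apply a _ z).symm
        _ = dslope (fun w => h w * (1 + (-a) * dslope ω 0 w)) 0 z := eqOn_dslope_ball hEh0 hz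
        _ = h z * dslope (fun w => 1 + (-a) * dslope ω 0 w) 0 z +
            (1 + (-a) * dslope ω 0 0) * dslope h 0 z :=
            dslope_mul_apply _ _ hha0.differentiableAt
              ((hω1a.differentiableAt.const_mul (-a)).const_add 1) z
        _ = h z * ((-a) * dslope (dslope ω 0) 0 z) + (1 + (-a) * a) * dslope h 0 z := by
            rw [dslope_const_add_mul_apply 1 (-a) _ hω1a.differentiableAt z, ← ha_def]
    have vb : b = (1 + (-a) * a) * x := by
      have h1 := hEh1 ballO
      simp only [hh0, zero_mul, zero_add] at h1
      exact h1
    have hEh2 : EqOn (dslope (dslope (dslope ω 0) 0) 0)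
        (fun z => h z * ((-a) * dslope (dslope (dslope ω 0) 0) 0 z) +
          (((-a) * b) * dslope h 0 z + (1 + (-a) * a) * dslope (dslope h 0) 0 z))
        (ball (0:ℂ) 1) := by
      intro z hz
      calc dslope (dslope (dslope ω 0) 0) 0 z
          = dslope (fun w => h w * ((-a) * dslope (dslope ω 0) 0 w) +
              (1 + (-a) * a) * dslope h 0 w) 0 z := eqOn_dslope_ball hEh1 hz
        _ = dslope (fun w => h w * ((-a) * dslope (dslope ω 0) 0 w)) 0 z +
            dslope (fun w => (1 + (-a) * a) * dslope h 0 w) 0 z :=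
            dslope_add_apply _ _
              (hha0.differentiableAt.mul (hω2a.differentiableAt.const_mul (-a)))
              (hh1a.differentiableAt.const_mul _) z
        _ = (h z * dslope (fun w => (-a) * dslope (dslope ω 0) 0 w) 0 z +
              ((-a) * dslope (dslope ω 0) 0 0) * dslope h 0 z) +
            (1 + (-a) * a) * dslope (dslope h 0) 0 z := by
            rw [dslope_mul_apply _ _ hha0.differentiableAt
              (hω2a.differentiableAt.const_mul (-a)) z,
              dslope_const_mul_apply _ _ hh1a.differentiableAt z]
        _ = h z * ((-a) * dslope (dslope (dslope ω 0) 0) 0 z) +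
            (((-a) * b) * dslope h 0 z + (1 + (-a) * a) * dslope (dslope h 0) 0 z) := by
            rw [dslope_const_mul_apply (-a) _ hω2a.differentiableAt z, ← hb_def]
            ring
    have vd : d = ((-a) * b) * x + (1 + (-a) * a) * h₂ := by
      have h1 := hEh2 ballO
      simp only [hh0, zero_mul, zero_add] at h1
      exact h1
    set t := h₂ / ((1 : ℂ) - ((‖x‖ : ℝ) : ℂ) ^ 2) with ht_def
    have hcast : ((1 : ℂ) - ((‖x‖ : ℝ) : ℂ) ^ 2) = (((1 - ‖x‖ ^ 2 : ℝ)) : ℂ) := by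
      push_cast
      ring
    have htmul : ((1:ℂ) - ((‖x‖ : ℝ) : ℂ) ^ 2) * t = h₂ := by
      by_cases hc : (1 : ℝ) - ‖x‖ ^ 2 = 0
      · have h3 : ‖h₂‖ ≤ 0 := by linarith [hsp]
        have hz2 : h₂ = 0 := norm_eq_zero.mp (le_antisymm h3 (norm_nonneg _))
        rw [hcast, hc, hz2]
        simp
      · have hne' : ((1:ℂ) - ((‖x‖ : ℝ) : ℂ) ^ 2) ≠ 0 := by
          rw [hcast]
          exact Complex.ofReal_ne_zero.mpr hc
        rw [ht_def]
        field_simp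
    have htle : ‖t‖ ≤ 1 := by
      by_cases hc : (1 : ℝ) - ‖x‖ ^ 2 = 0
      · rw [ht_def, hcast, hc]
        simp
      · have hpos : 0 < 1 - ‖x‖ ^ 2 := by
          rcases lt_or_eq_of_le (by nlinarith [hxle, norm_nonneg x] :
            (0:ℝ) ≤ 1 - ‖x‖ ^ 2) with hh | hh
          · exact hh
          · exact absurd hh.symm hc
        rw [ht_def, norm_div, hcast, Complex.norm_of_nonneg hpos.le, div_le_one hpos]
        linarith [hsp]
    refine ⟨x, t, hxle, htle, ?_, ?_⟩
    · rw [hco2, hco1, vc2, vc1]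
      linear_combination 4 * vb
    · rw [hco3, hco1, vc3, vc2, vc1]
      linear_combination (16*a - 8*a*x) * vb + 8 * vd + (8*a^2 - 8) * htmul
end

section
/- Define G(c, x) = 2c + 3(4 − c²)(1 − |x|²) + |c³/2 + c x(4 − c²) − (3/2) c x²(4 − c²)| for real c ∈ [0,2] and complex x with |x| ≤ 1. The maximum of G over this domain equals (4/81)(95 + 23√46), and it is attained at c = (8 − √46)/3, x = (11 − √46)/75; that is, G(c, x) ≤ (4/81)(95 + 23√46) for all c ∈ [0,2] and all x ∈ ℂ with |x| ≤ 1, with equality at that point. -/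
open Complex

private lemma sq_abs_quad (a b d : ℝ) (x : ℂ) :
    (‖(a:ℂ) + b*x - d*x^2‖)^2
      = (a + d*(‖x‖)^2)^2 + b^2*(‖x‖)^2
        + 2*b*x.re*(a - d*(‖x‖)^2) - 4*a*d*x.re^2 := by
  rw [Complex.sq_norm, Complex.sq_norm, Complex.normSq_apply, Complex.normSq_apply]
  simp [Complex.add_re, Complex.add_im, Complex.sub_re, Complex.sub_im,
    Complex.mul_re, Complex.mul_im, Complex.ofReal_re, Complex.ofReal_im, pow_two]
  ring

private lemma tri_quad (a b d : ℝ) (ha : 0 ≤ a) (hb : 0 ≤ b) (hd : 0 ≤ d) (x : ℂ) :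
    ‖(a:ℂ) + b*x - d*x^2‖ ≤ a + b*(‖x‖) + d*(‖x‖)^2 := by
  have h1 : ‖(a:ℂ) + b*x - d*x^2‖
      ≤ ‖(a:ℂ) + b*x‖ + ‖(d:ℂ)*x^2‖ := by
    rw [sub_eq_add_neg]
    simpa only [norm_neg] using norm_add_le ((a:ℂ) + b*x) (-((d:ℂ)*x^2))
  have h2 : ‖(a:ℂ) + b*x‖ ≤ ‖(a:ℂ)‖ + ‖(b:ℂ)*x‖ :=
    norm_add_le _ _
  have e1 : ‖(a:ℂ)‖ = a := by rw [Complex.norm_real, Real.norm_eq_abs, _root_.abs_of_nonneg ha]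
  have e2 : ‖(b:ℂ)*x‖ = b * ‖x‖ := by
    rw [norm_mul, Complex.norm_real, Real.norm_eq_abs, _root_.abs_of_nonneg hb]
  have e3 : ‖(d:ℂ)*x^2‖ = d * (‖x‖)^2 := by
    rw [norm_mul, norm_pow, Complex.norm_real, Real.norm_eq_abs, _root_.abs_of_nonneg hd]
  linarith

private lemma sq_le_imp (u v : ℝ) (hu : 0 ≤ u) (hv : 0 ≤ v) (h : u^2 ≤ v^2) : u ≤ v := by
  nlinarith

/-- global tight bound for the case-B majorant -/
private lemma caseB_poly (c t r : ℝ) (hr : r^2 = 46) (hc0 : 0 ≤ c) (hc2 : c ≤ 2)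
    (hr1 : 6.782 ≤ r) (hr2 : r ≤ 6.783) :
    2*c + 3*(4-c^2)*(1-t^2) + (c^3/2 + c*(4-c^2)*t - 3/2*c*(4-c^2)*t^2)
      ≤ 4/81*(95+23*r) := by
  have key : 4/81*(95+23*r) - (2*c + 3*(4-c^2)*(1-t^2) + (c^3/2 + c*(4-c^2)*t - 3/2*c*(4-c^2)*t^2))
      = (3*c-8+r)^2*(8+2*r-3*c)/81 + (2-c)*((6+3*c)*t-c)^2/6 := by
    linear_combination ((24 - 9*c - 2*r)/81) * hr
  nlinarith [mul_nonneg (sq_nonneg (3*c-8+r)) (by linarith : (0:ℝ) ≤ 8+2*r-3*c),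
    mul_nonneg (sq_nonneg ((6+3*c)*t-c)) (by linarith : (0:ℝ) ≤ 2-c)]

private lemma chi_le (c r : ℝ) (hr : r^2 = 46) (hc0 : 0 ≤ c) (hc2 : c ≤ 2/3)
    (hr1 : 6.782 ≤ r) (hr2 : r ≤ 6.783) :
    35/3 + 17/6*c - 35/12*c^2 + 7/24*c^3 ≤ 4/81*(95+23*r) := by
  nlinarith [sq_nonneg (c - 53/100), mul_nonneg (sq_nonneg (c - 53/100)) hc0,
    mul_nonneg (sq_nonneg (c - 53/100)) (by linarith : (0:ℝ) ≤ 2/3 - c),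
    mul_nonneg hc0 (by linarith : (0:ℝ) ≤ 2/3 - c)]

private lemma psi_le_small (c r : ℝ) (hr : r^2 = 46) (hc0 : 0 ≤ c) (hc2 : c ≤ 0.3)
    (hr1 : 6.782 ≤ r) (hr2 : r ≤ 6.783) :
    12 + 2*c - 8/3*c^2 + 2/3*c^3 ≤ 4/81*(95+23*r) := by
  nlinarith [mul_nonneg hc0 (by linarith : (0:ℝ) ≤ 0.3-c), sq_nonneg c,
    mul_nonneg (mul_nonneg hc0 hc0) (by linarith : (0:ℝ) ≤ 0.3-c)]

private lemma psi_le_big (c r : ℝ) (hr : r^2 = 46) (hc0 : 0.65 ≤ c) (hc2 : c ≤ 2)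
    (hr1 : 6.782 ≤ r) (hr2 : r ≤ 6.783) :
    12 + 2*c - 8/3*c^2 + 2/3*c^3 ≤ 4/81*(95+23*r) := by
  nlinarith [mul_nonneg (mul_nonneg (by linarith : (0:ℝ) ≤ c-0.65) (by linarith : (0:ℝ) ≤ 2-c)) (by linarith : (0:ℝ) ≤ c+1),
    mul_nonneg (by linarith : (0:ℝ) ≤ c-0.65) (by linarith : (0:ℝ) ≤ 2-c)]

/-- triangle-inequality bound works when `t ≥ 1/6` or `c ≤ 0.3` or `c ≥ 0.65` -/
private lemma tri_poly (c t r : ℝ) (hr : r^2 = 46) (hc0 : 0 ≤ c) (hc2 : c ≤ 2)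
    (ht0 : 0 ≤ t) (ht1 : t ≤ 1) (hr1 : 6.782 ≤ r) (hr2 : r ≤ 6.783)
    (hcase : 1/6 ≤ t ∨ c ≤ 0.3 ∨ 0.65 ≤ c) :
    2*c + 3*(4-c^2)*(1-t^2) + (c^3/2 + c*(4-c^2)*t + 3/2*c*(4-c^2)*t^2)
      ≤ 4/81*(95+23*r) := by
  have hpsi : 2*c + 3*(4-c^2)*(1-t^2) + (c^3/2 + c*(4-c^2)*t + 3/2*c*(4-c^2)*t^2)
      ≤ 12 + 2*c - 8/3*c^2 + 2/3*c^3 := by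
    nlinarith [mul_nonneg (by linarith : (0:ℝ) ≤ 2+c) (sq_nonneg ((6-3*c)*t-c))]
  rcases hcase with h | h | h
  · rcases le_or_gt c (2/3) with h2 | h2
    · have hchi : 2*c + 3*(4-c^2)*(1-t^2) + (c^3/2 + c*(4-c^2)*t + 3/2*c*(4-c^2)*t^2)
          ≤ 35/3 + 17/6*c - 35/12*c^2 + 7/24*c^3 := by
        have key : 35/3 + 17/6*c - 35/12*c^2 + 7/24*c^3
            - (2*c + 3*(4-c^2)*(1-t^2) + (c^3/2 + c*(4-c^2)*t + 3/2*c*(4-c^2)*t^2))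
            = (4-c^2)*(t-1/6)*((3-3/2*c)*(t+1/6) - c) := by ring
        nlinarith [mul_nonneg (mul_nonneg (by nlinarith : (0:ℝ) ≤ 4-c^2)
          (by linarith : (0:ℝ) ≤ t-1/6)) (by nlinarith : (0:ℝ) ≤ (3-3/2*c)*(t+1/6) - c)]
      linarith [chi_le c r hr hc0 h2 hr1 hr2]
    · linarith [psi_le_big c r hr (by linarith) hc2 hr1 hr2]
  · linarith [psi_le_small c r hr hc0 h hr1 hr2]
  · linarith [psi_le_big c r hr h hc2 hr1 hr2]

/-- discriminant-type lemma for sub-case A1 -/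
private lemma A1_poly (c r : ℝ) (hr : r^2 = 46) (hc0 : 0.3 ≤ c) (hc2 : c ≤ 0.65)
    (hr1 : 6.782 ≤ r) (hr2 : r ≤ 6.783) :
    c^2*(c^4+28*c^2+16) ≤ 12*(4-c^2)*((4/81*(95+23*r)-12) - 2*c + 3*c^2) := by
  nlinarith [mul_nonneg (by linarith : (0:ℝ) ≤ c-0.3) (by linarith : (0:ℝ) ≤ 0.65-c),
    sq_nonneg (c-0.41), mul_nonneg (mul_nonneg (by linarith : (0:ℝ) ≤ c-0.3) (by linarith : (0:ℝ) ≤ 0.65-c)) (sq_nonneg c),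
    mul_nonneg (mul_nonneg (by linarith : (0:ℝ) ≤ c-0.3) (by linarith : (0:ℝ) ≤ 0.65-c)) (sq_nonneg (c-1))]

/-- single-variable lemma for sub-case A2 -/
private lemma A2_poly (c r : ℝ) (hr : r^2 = 46) (hc0 : 0.3 ≤ c) (hc2 : c ≤ 0.65)
    (hr1 : 6.782 ≤ r) (hr2 : r ≤ 6.783) :
    12 + 2*c - 8/3*c^2 - 1/12*c^3 ≤ 4/81*(95+23*r) := by
  nlinarith [mul_nonneg (by linarith : (0:ℝ) ≤ c-0.3) (by linarith : (0:ℝ) ≤ 0.65-c),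
    sq_nonneg (c-0.37), mul_nonneg (sq_nonneg (c-0.37)) (by linarith : (0:ℝ) ≤ c)]

private lemma caseB_E (a b d t p : ℝ) (ha : 0 ≤ a) (hd : 0 ≤ d)
    (hp1 : p ≤ t) (hcb : 4*a*d*t ≤ b*(a - d*t^2)) :
    (a + d*t^2)^2 + b^2*t^2 + 2*b*p*(a - d*t^2) - 4*a*d*p^2 ≤ (a + b*t - d*t^2)^2 := by
  nlinarith [mul_nonneg (by linarith : (0:ℝ) ≤ t - p)
      (by linarith : (0:ℝ) ≤ b*(a-d*t^2) - 4*a*d*t),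
    mul_nonneg (mul_nonneg ha hd) (sq_nonneg (t-p))]

private lemma caseA1_E (a b d t p : ℝ) (ha : 0 ≤ a) (hb : 0 ≤ b) (hd : 0 ≤ d)
    (hp1 : p ≤ t) (had : 0 ≤ a - d*t^2) :
    (a + d*t^2)^2 + b^2*t^2 + 2*b*p*(a - d*t^2) - 4*a*d*p^2
      ≤ (a - d*t^2 + b*t)^2 + 4*a*d*t^2 := by
  nlinarith [mul_nonneg (mul_nonneg hb had) (by linarith : (0:ℝ) ≤ t - p),
    mul_nonneg (mul_nonneg ha hd) (sq_nonneg p)]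

private lemma caseA2_E (a b d t p : ℝ) (ha : 0 ≤ a) (hb : 0 ≤ b) (hd : 0 ≤ d)
    (hp2 : -t ≤ p) (had : 0 ≤ d*t^2 - a) :
    (a + d*t^2)^2 + b^2*t^2 + 2*b*p*(a - d*t^2) - 4*a*d*p^2
      ≤ (d*t^2 - a + b*t)^2 + 4*a*d*t^2 := by
  nlinarith [mul_nonneg (mul_nonneg hb had) (by linarith : (0:ℝ) ≤ t + p),
    mul_nonneg (mul_nonneg ha hd) (sq_nonneg p)]

private lemma disc_step (S aa K tt V : ℝ) (hV : V ≤ tt*K) (htt : 0 ≤ tt)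
    (hdisc : K ≤ 12*S*aa) : V ≤ (aa + 3*S*tt)^2 + tt*(12*S*aa - K) - (3*S*tt - aa)^2 := by
  nlinarith [mul_nonneg htt (by linarith : (0:ℝ) ≤ 12*S*aa - K)]

private lemma base_poly (c t r : ℝ) (hc0 : 0 ≤ c) (hS : (0:ℝ) ≤ 4 - c^2)
    (hr1 : 6.782 ≤ r) :
    2*c + 3*(4-c^2)*(1-t^2) ≤ 4/81*(95+23*r) := by
  nlinarith [sq_nonneg (3*c-1), mul_nonneg hS (sq_nonneg t)]

private lemma A2_lin (c t : ℝ) (hc0 : 0 ≤ c) (ht6 : t ≤ 1/6) :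
    2*c + 3*(4-c^2)*(1-t^2) + (3/2*c*(4-c^2)*t^2 - c^3/2 + c*(4-c^2)*t + 3/2*c^3*t)
      ≤ 12 + 2*c - 8/3*c^2 - 1/12*c^3 := by
  nlinarith [mul_nonneg (by linarith : (0:ℝ) ≤ 2+c) (sq_nonneg ((6-3*c)*t-c)),
    mul_nonneg (pow_nonneg hc0 3) (by linarith : (0:ℝ) ≤ 1/6 - t)]

set_option maxHeartbeats 1000000 in
/-- `G(c,x) = 2c + 3(4 − c²)(1 − |x|²) + |c³/2 + cx(4 − c²) − (3/2)cx²(4 − c²)|`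
attains its maximum `(4/81)(95 + 23√46)` over `{(c,x) : c ∈ [0,2], |x| ≤ 1}` at
`c = (8 − √46)/3`, `x = (11 − √46)/75`. -/
theorem G_max :
    (∀ (c : ℝ) (x : ℂ), c ∈ Set.Icc (0:ℝ) 2 → ‖x‖ ≤ 1 →
      2 * c + 3 * (4 - c ^ 2) * (1 - (‖x‖) ^ 2)
        + ‖(c : ℂ) ^ 3 / 2 + (c : ℂ) * x * (4 - (c : ℂ) ^ 2)
            - 3 / 2 * (c : ℂ) * x ^ 2 * (4 - (c : ℂ) ^ 2)‖
      ≤ 4 / 81 * (95 + 23 * Real.sqrt 46)) ∧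
    ((8 - Real.sqrt 46) / 3) ∈ Set.Icc (0:ℝ) 2 ∧
    ‖(((11 - Real.sqrt 46) / 75 : ℝ) : ℂ)‖ ≤ 1 ∧
    (2 * ((8 - Real.sqrt 46) / 3)
      + 3 * (4 - ((8 - Real.sqrt 46) / 3) ^ 2)
        * (1 - (‖(((11 - Real.sqrt 46) / 75 : ℝ) : ℂ)‖) ^ 2)
      + ‖(((8 - Real.sqrt 46) / 3 : ℝ) : ℂ) ^ 3 / 2
          + (((8 - Real.sqrt 46) / 3 : ℝ) : ℂ) * (((11 - Real.sqrt 46) / 75 : ℝ) : ℂ)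
            * (4 - (((8 - Real.sqrt 46) / 3 : ℝ) : ℂ) ^ 2)
          - 3 / 2 * (((8 - Real.sqrt 46) / 3 : ℝ) : ℂ)
            * (((11 - Real.sqrt 46) / 75 : ℝ) : ℂ) ^ 2
            * (4 - (((8 - Real.sqrt 46) / 3 : ℝ) : ℂ) ^ 2)‖
      = 4 / 81 * (95 + 23 * Real.sqrt 46)) := by

  obtain ⟨r, hrdef⟩ : ∃ r, Real.sqrt 46 = r := ⟨_, rfl⟩
  have hr : r^2 = 46 := by rw [← hrdef]; exact Real.sq_sqrt (by norm_num)
  have hr0 : 0 ≤ r := hrdef ▸ Real.sqrt_nonneg 46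
  have hr1 : 6.782 ≤ r := by nlinarith
  have hr2 : r ≤ 6.783 := by nlinarith
  rw [hrdef]
  refine ⟨?_, ?_, ?_, ?_⟩
  · -- main inequality
    intro c x hc hx
    obtain ⟨hc0, hc2⟩ := hc
    obtain ⟨t, htdef⟩ : ∃ t, ‖x‖ = t := ⟨_, rfl⟩
    rw [htdef] at hx ⊢
    have ht0 : 0 ≤ t := htdef ▸ norm_nonneg x
    have hS : (0:ℝ) ≤ 4 - c^2 := by nlinarith
    obtain ⟨a, hadef⟩ : ∃ a, c^3/2 = a := ⟨_, rfl⟩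
    obtain ⟨b, hbdef⟩ : ∃ b, c*(4-c^2) = b := ⟨_, rfl⟩
    obtain ⟨d, hddef⟩ : ∃ d, 3/2*c*(4-c^2) = d := ⟨_, rfl⟩
    have ha : 0 ≤ a := by rw [← hadef]; positivity
    have hb : 0 ≤ b := by rw [← hbdef]; positivity
    have hd : 0 ≤ d := by rw [← hddef]; positivity
    have hz : (c : ℂ) ^ 3 / 2 + (c : ℂ) * x * (4 - (c : ℂ) ^ 2)
        - 3 / 2 * (c : ℂ) * x ^ 2 * (4 - (c : ℂ) ^ 2) = (a:ℂ) + b*x - d*x^2 := by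
      rw [← hadef, ← hbdef, ← hddef]; push_cast; ring
    rw [hz]
    obtain ⟨w, hwdef⟩ : ∃ w, ‖(a:ℂ) + b*x - d*x^2‖ = w := ⟨_, rfl⟩
    rw [hwdef]
    have hw0 : 0 ≤ w := hwdef ▸ norm_nonneg _
    by_cases hcase : 1/6 ≤ t ∨ c ≤ 0.3 ∨ 0.65 ≤ c
    · -- triangle inequality regime
      have htr : w ≤ a + b*t + d*t^2 := by
        rw [← hwdef, ← htdef]; exact tri_quad a b d ha hb hd x
      have := tri_poly c t r hr hc0 hc2 ht0 hx hr1 hr2 hcase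
      rw [hadef, hbdef, hddef] at this
      linarith
    · push_neg at hcase
      obtain ⟨ht6, hc3, hc65⟩ := hcase
      obtain ⟨p, hpdef⟩ : ∃ p, x.re = p := ⟨_, rfl⟩
      have hpt : |p| ≤ t := hpdef ▸ htdef ▸ Complex.abs_re_le_norm x
      have hp1 : p ≤ t := (abs_le.mp hpt).2
      have hp2 : -t ≤ p := (abs_le.mp hpt).1
      have hE : w^2 = (a + d*t^2)^2 + b^2*t^2 + 2*b*p*(a - d*t^2) - 4*a*d*p^2 := by
        rw [← hwdef, ← htdef, ← hpdef]; exact sq_abs_quad a b d x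
      have hc3' : c ≤ 0.3 → False := fun h => absurd h hc3.not_ge
      by_cases hB : 6*c^2*t ≤ c^2 - 3*(4-c^2)*t^2
      · -- case B : maximum of the phase factor is at p = t
        have hBn : (0:ℝ) ≤ c^2 - 3*(4-c^2)*t^2 - 6*c^2*t := by linarith
        have had : 0 ≤ a - d*t^2 := by
          rw [← hadef, ← hddef]; nlinarith [mul_nonneg (mul_nonneg hc0 hc0) ht0]
        have hcb : 4*a*d*t ≤ b*(a - d*t^2) := by
          rw [← hadef, ← hbdef, ← hddef]
          nlinarith [mul_nonneg (mul_nonneg (mul_nonneg hc0 hc0) hS) hBn]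
        have hEle : w^2 ≤ (a + b*t - d*t^2)^2 := by
          rw [hE]; exact caseB_E a b d t p ha hd hp1 hcb
        have hw1 : 0 ≤ a + b*t - d*t^2 := by linarith [mul_nonneg hb ht0]
        have habs : w ≤ a + b*t - d*t^2 := sq_le_imp _ _ hw0 hw1 hEle
        have := caseB_poly c t r hr hc0 hc2 hr1 hr2
        rw [hadef, hbdef, hddef] at this
        linarith
      · push_neg at hB
        have hc3'' : (0.3:ℝ) ≤ c := le_of_lt hc3
        have hc65' : c ≤ 0.65 := le_of_lt hc65
        have ht6' : t ≤ 1/6 := le_of_lt ht6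
        -- base ≤ M
        have hbase : 2*c + 3*(4-c^2)*(1-t^2) ≤ 4/81*(95+23*r) :=
          base_poly c t r hc0 hS hr1
        by_cases hD : 3*(4-c^2)*t^2 ≤ c^2
        · -- sub-case A1
          have had : 0 ≤ a - d*t^2 := by
            rw [← hadef, ← hddef]; nlinarith
          have hEle : w^2 ≤ (a - d*t^2 + b*t)^2 + 4*a*d*t^2 := by
            rw [hE]; exact caseA1_E a b d t p ha hb hd hp1 had
          have hw1b : a - d*t^2 + b*t ≤ c*t*(2*c^2+4) := by
            rw [← hadef, ← hbdef, ← hddef]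
            nlinarith [mul_nonneg hc0 (by linarith : (0:ℝ) ≤ 6*c^2*t - (c^2 - 3*(4-c^2)*t^2))]
          have hw1 : 0 ≤ a - d*t^2 + b*t := by linarith [mul_nonneg hb ht0]
          have h4ad : 4*a*d*t^2 = 3*c^4*(4-c^2)*t^2 := by
            rw [← hadef, ← hddef]; ring
          have hEle2 : w^2 ≤ c^2*t^2*(c^4+28*c^2+16) := by
            have hsq : (a - d*t^2 + b*t)^2 ≤ (c*t*(2*c^2+4))^2 :=
              pow_le_pow_left₀ hw1 hw1b 2
            have hring : (c*t*(2*c^2+4))^2 + 3*c^4*(4-c^2)*t^2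
                = c^2*t^2*(c^4+28*c^2+16) := by ring
            linarith
          have hA1 := A1_poly c r hr hc3'' hc65' hr1 hr2
          have hkey : w^2 ≤ (4/81*(95+23*r) - (2*c + 3*(4-c^2)*(1-t^2)))^2 := by
            have hid : (4/81*(95+23*r) - (2*c + 3*(4-c^2)*(1-t^2)))^2
                - c^2*t^2*(c^4+28*c^2+16)
                - (3*(4-c^2)*t^2 - ((4/81*(95+23*r)-12) - 2*c + 3*c^2))^2
                - t^2*(12*(4-c^2)*((4/81*(95+23*r)-12) - 2*c + 3*c^2)
                    - c^2*(c^4+28*c^2+16)) = 0 := by ring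
            have hsq1 := sq_nonneg (3*(4-c^2)*t^2 - ((4/81*(95+23*r)-12) - 2*c + 3*c^2))
            have hsq2 := mul_nonneg (sq_nonneg t)
              (by linarith : (0:ℝ) ≤ 12*(4-c^2)*((4/81*(95+23*r)-12) - 2*c + 3*c^2)
                  - c^2*(c^4+28*c^2+16))
            linarith
          have habs : w ≤ 4/81*(95+23*r) - (2*c + 3*(4-c^2)*(1-t^2)) :=
            sq_le_imp _ _ hw0 (by linarith) hkey
          linarith
        · -- sub-case A2
          push_neg at hD
          have had : 0 ≤ d*t^2 - a := by
            rw [← hadef, ← hddef]; nlinarith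
          have hEle : w^2 ≤ (d*t^2 - a + b*t)^2 + 4*a*d*t^2 := by
            rw [hE]; exact caseA2_E a b d t p ha hb hd hp2 had
          have h4ad : 4*a*d*t^2 = 3*c^4*(4-c^2)*t^2 := by
            rw [← hadef, ← hddef]; ring
          have hbt : 3*c^3*t*(b*t) = 3*c^4*(4-c^2)*t^2 := by rw [← hbdef]; ring
          have hEle2 : w^2 ≤ (d*t^2 - a + b*t + 3/2*c^3*t)^2 := by
            have h3 : (0:ℝ) ≤ 3*c^3*t := by positivity
            have hble : b*t ≤ d*t^2 - a + b*t := by linarith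
            have hgain : 3*c^3*t*(b*t) ≤ 3*c^3*t*(d*t^2 - a + b*t) :=
              mul_le_mul_of_nonneg_left hble h3
            have hring : (d*t^2 - a + b*t + 3/2*c^3*t)^2
                = (d*t^2 - a + b*t)^2 + 3*c^3*t*(d*t^2 - a + b*t) + (3/2*c^3*t)^2 := by ring
            have hsq := sq_nonneg (3/2*c^3*t)
            linarith
          have hw2 : 0 ≤ d*t^2 - a + b*t + 3/2*c^3*t := by
            have h1 := mul_nonneg hb ht0
            have h2 := mul_nonneg (pow_nonneg hc0 3) ht0
            linarith
          have habs : w ≤ d*t^2 - a + b*t + 3/2*c^3*t := sq_le_imp _ _ hw0 hw2 hEle2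
          have hlin : 2*c + 3*(4-c^2)*(1-t^2) + (d*t^2 - a + b*t + 3/2*c^3*t)
              ≤ 12 + 2*c - 8/3*c^2 - 1/12*c^3 := by
            have := A2_lin c t hc0 ht6'
            rw [hadef, hbdef, hddef] at this
            linarith
          have := A2_poly c r hr hc3'' hc65' hr1 hr2
          linarith
  · -- membership
    exact Set.mem_Icc.mpr ⟨by linarith, by linarith⟩
  · -- |x₀| ≤ 1
    rw [Complex.norm_real, Real.norm_eq_abs, _root_.abs_of_nonneg (by linarith : (0:ℝ) ≤ (11 - r)/75)]
    linarith
  · -- equality at the extremal point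
    have hzeq : ((((8 - r) / 3 : ℝ) : ℂ) ^ 3 / 2
          + (((8 - r) / 3 : ℝ) : ℂ) * (((11 - r) / 75 : ℝ) : ℂ)
            * (4 - (((8 - r) / 3 : ℝ) : ℂ) ^ 2)
          - 3 / 2 * (((8 - r) / 3 : ℝ) : ℂ)
            * (((11 - r) / 75 : ℝ) : ℂ) ^ 2
            * (4 - (((8 - r) / 3 : ℝ) : ℂ) ^ 2))
        = ((( ((8-r)/3)^3/2 + ((8-r)/3)*((11-r)/75)*(4-((8-r)/3)^2)
            - 3/2*((8-r)/3)*((11-r)/75)^2*(4-((8-r)/3)^2) : ℝ)) : ℂ) := by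
      push_cast; ring
    have hwval : ((8-r)/3)^3/2 + ((8-r)/3)*((11-r)/75)*(4-((8-r)/3)^2)
            - 3/2*((8-r)/3)*((11-r)/75)^2*(4-((8-r)/3)^2)
        = 45224/2025 - 6634/2025*r := by
      linear_combination (-(1/101250)*r^3 - (2/50625)*r^2 - (488/50625)*r + 15188/50625) * hr
    rw [hzeq, hwval, Complex.norm_real, Complex.norm_real, Real.norm_eq_abs, Real.norm_eq_abs,
      _root_.abs_of_nonneg (by linarith : (0:ℝ) ≤ (11 - r)/75),
      _root_.abs_of_nonneg (by linarith : (0:ℝ) ≤ 45224/2025 - 6634/2025*r)]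
    linear_combination ((1/16875)*r^2 - (38/16875)*r - 5078/16875) * hr
end
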